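/- arXiv:1601.07236 — 5 statements merged into one kernel-verified Lean document; each statement's English description precedes it below -/
import Mathlib

section
/- Assume w is quasi-definite. For k ≥ 0 and z ≠ 0 define the 2N×2N Szegő matrix in N×N blocks R_k(z) := [[I + α^L_{1,k+1}(α^R_{2,k})† z^{−1}, −α^L_{1,k+1} H^R_k z^{−1}], [−(H^R_k)^{−1}(α^R_{2,k})† z^{−1}, z^{−1} I]]. Then for every n ≥ 1 and every z ∈ ℂ with z ≠ 0 and |z| ≠ 1, the 2N×2N block matrix Y_n(z) := [[P^L_{1,n}(z), Q^L_{1,n}(z)], [−(H^R_{n−1})^{−1} P̃^R_{2,n−1}(z), −(H^R_{n−1})^{−1} Q^R_{2,n−1}(z)]] satisfies the transfer-matrix formula Y_n(z) = R_{n−1}(z)·R_{n−2}(z)···R_0(z)·[[z^n I, ∮ w(ζ)(1 − ζ^{−1}z)^{−1} dm(ζ)], [0, I]]. -/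
open Complex Matrix

noncomputable section

/-- Normalized matrix-valued integral over the unit circle:
`∮ f(ζ) dm(ζ) := (2π)⁻¹ ∫₀^{2π} f(e^{iθ}) dθ`, taken entrywise. -/
def circInt (N : ℕ) (f : ℂ → Matrix (Fin N) (Fin N) ℂ) : Matrix (Fin N) (Fin N) ℂ :=
  Matrix.of fun i j =>
    (2 * Real.pi)⁻¹ • ∫ θ in (0:ℝ)..(2 * Real.pi), f (Complex.exp (θ * Complex.I)) i j

/-- Evaluation at `z` of the matrix polynomial with coefficients `c 0, …, c n`. -/
def mPolyEval {N : ℕ} (c : ℕ → Matrix (Fin N) (Fin N) ℂ) (n : ℕ) (z : ℂ) :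
    Matrix (Fin N) (Fin N) ℂ :=
  ∑ k ∈ Finset.range (n + 1), z ^ k • c k

/-- Evaluation at `z` of the reciprocal polynomial `P̃(z) = ∑_{k=0}^n (c (n-k))ᴴ z^k`. -/
def mRecipEval {N : ℕ} (c : ℕ → Matrix (Fin N) (Fin N) ℂ) (n : ℕ) (z : ℂ) :
    Matrix (Fin N) (Fin N) ℂ :=
  ∑ k ∈ Finset.range (n + 1), z ^ k • (c (n - k))ᴴ

/-- The `j`-th moment `μ̂ j = ∮ w(ζ) ζ^{-j} dm(ζ)` of the matrix weight `w`. -/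
def mMoment (N : ℕ) (w : ℂ → Matrix (Fin N) (Fin N) ℂ) (j : ℤ) : Matrix (Fin N) (Fin N) ℂ :=
  circInt N fun ζ => ζ ^ (-j) • w ζ

/-- Quasi-definiteness: all the truncated block Toeplitz moment matrices
`M^L_[n]` and `M^R_[n]` are invertible. -/
def QuasiDef (N : ℕ) (w : ℂ → Matrix (Fin N) (Fin N) ℂ) : Prop :=
  ∀ n : ℕ, 1 ≤ n →
    IsUnit (Matrix.of fun p q : Fin n × Fin N =>
      mMoment N w ((p.1 : ℤ) - (q.1 : ℤ)) p.2 q.2) ∧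
    IsUnit (Matrix.of fun p q : Fin n × Fin N =>
      mMoment N w ((q.1 : ℤ) - (p.1 : ℤ)) p.2 q.2)

/-- `P n` lists the coefficients of the monic degree-`n` Szegő polynomial `P^L_{1,n}`:
monicity together with `∮ P^L_{1,n}(ζ) w(ζ) ζ^{-j} dm(ζ) = 0` for `j = 0,…,n-1`. -/
def IsSzPL1 (N : ℕ) (w : ℂ → Matrix (Fin N) (Fin N) ℂ)
    (P : ℕ → ℕ → Matrix (Fin N) (Fin N) ℂ) : Prop :=
  ∀ n : ℕ, P n n = 1 ∧ (∀ k, n < k → P n k = 0) ∧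
    ∀ j < n, circInt N (fun ζ => ζ ^ (-(j : ℤ)) • (mPolyEval (P n) n ζ * w ζ)) = 0

/-- `P n` lists the coefficients of the monic degree-`n` Szegő polynomial `P^R_{1,n}`:
monicity together with `∮ ζ^{-j} w(ζ) P^R_{1,n}(ζ) dm(ζ) = 0` for `j = 0,…,n-1`. -/
def IsSzPR1 (N : ℕ) (w : ℂ → Matrix (Fin N) (Fin N) ℂ)
    (P : ℕ → ℕ → Matrix (Fin N) (Fin N) ℂ) : Prop :=
  ∀ n : ℕ, P n n = 1 ∧ (∀ k, n < k → P n k = 0) ∧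
    ∀ j < n, circInt N (fun ζ => ζ ^ (-(j : ℤ)) • (w ζ * mPolyEval (P n) n ζ)) = 0

/-- `P n` lists the coefficients of the monic degree-`n` Szegő polynomial `P^L_{2,n}`:
monicity together with `∮ ζ^{j} w(ζ) (P^L_{2,n}(ζ))† dm(ζ) = 0` for `j = 0,…,n-1`. -/
def IsSzPL2 (N : ℕ) (w : ℂ → Matrix (Fin N) (Fin N) ℂ)
    (P : ℕ → ℕ → Matrix (Fin N) (Fin N) ℂ) : Prop :=
  ∀ n : ℕ, P n n = 1 ∧ (∀ k, n < k → P n k = 0) ∧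
    ∀ j < n, circInt N (fun ζ => ζ ^ j • (w ζ * (mPolyEval (P n) n ζ)ᴴ)) = 0

/-- `P n` lists the coefficients of the monic degree-`n` Szegő polynomial `P^R_{2,n}`:
monicity together with `∮ (P^R_{2,n}(ζ))† w(ζ) ζ^{j} dm(ζ) = 0` for `j = 0,…,n-1`. -/
def IsSzPR2 (N : ℕ) (w : ℂ → Matrix (Fin N) (Fin N) ℂ)
    (P : ℕ → ℕ → Matrix (Fin N) (Fin N) ℂ) : Prop :=
  ∀ n : ℕ, P n n = 1 ∧ (∀ k, n < k → P n k = 0) ∧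
    ∀ j < n, circInt N (fun ζ => ζ ^ j • ((mPolyEval (P n) n ζ)ᴴ * w ζ)) = 0

/-- The Verblunsky matrix of the family `P`: the value at `0` of its `n`-th member. -/
def szVer {N : ℕ} (P : ℕ → ℕ → Matrix (Fin N) (Fin N) ℂ) (n : ℕ) :
    Matrix (Fin N) (Fin N) ℂ :=
  mPolyEval (P n) n 0

/-- Quasi-tau matrix `H^L_n = ∮ P^L_{1,n}(ζ) w(ζ) ζ^{-n} dm(ζ)` (from the family `P^L_{1,·}`). -/
def szHL (N : ℕ) (w : ℂ → Matrix (Fin N) (Fin N) ℂ)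
    (P : ℕ → ℕ → Matrix (Fin N) (Fin N) ℂ) (n : ℕ) : Matrix (Fin N) (Fin N) ℂ :=
  circInt N fun ζ => ζ ^ (-(n : ℤ)) • (mPolyEval (P n) n ζ * w ζ)

/-- Quasi-tau matrix `H^R_n = ∮ ζ^{-n} w(ζ) P^R_{1,n}(ζ) dm(ζ)` (from the family `P^R_{1,·}`). -/
def szHR (N : ℕ) (w : ℂ → Matrix (Fin N) (Fin N) ℂ)
    (P : ℕ → ℕ → Matrix (Fin N) (Fin N) ℂ) (n : ℕ) : Matrix (Fin N) (Fin N) ℂ :=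
  circInt N fun ζ => ζ ^ (-(n : ℤ)) • (w ζ * mPolyEval (P n) n ζ)

/-- Cauchy transform `Q^L_{1,n}(z) = ∮ ζ^{-n} P^L_{1,n}(ζ) w(ζ) (1-ζ^{-1}z)^{-1} dm(ζ)`. -/
def szQL1 (N : ℕ) (w : ℂ → Matrix (Fin N) (Fin N) ℂ)
    (P : ℕ → ℕ → Matrix (Fin N) (Fin N) ℂ) (n : ℕ) (z : ℂ) : Matrix (Fin N) (Fin N) ℂ :=
  circInt N fun ζ => (ζ ^ (-(n : ℤ)) * (1 - ζ⁻¹ * z)⁻¹) • (mPolyEval (P n) n ζ * w ζ)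

/-- Cauchy transform `Q^R_{2,n}(z) = ∮ ζ^{-(n+1)} P̃^R_{2,n}(ζ) w(ζ) (1-ζ^{-1}z)^{-1} dm(ζ)`. -/
def szQR2 (N : ℕ) (w : ℂ → Matrix (Fin N) (Fin N) ℂ)
    (P : ℕ → ℕ → Matrix (Fin N) (Fin N) ℂ) (n : ℕ) (z : ℂ) : Matrix (Fin N) (Fin N) ℂ :=
  circInt N fun ζ => (ζ ^ (-((n : ℤ) + 1)) * (1 - ζ⁻¹ * z)⁻¹) • (mRecipEval (P n) n ζ * w ζ)

namespace Stmt9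

variable {N : ℕ}

lemma expI_ne (θ : ℝ) : Complex.exp (θ * Complex.I) ≠ 0 := Complex.exp_ne_zero _

lemma cont_expI : Continuous fun θ : ℝ => Complex.exp (↑θ * Complex.I) :=
  Complex.continuous_exp.comp (Complex.continuous_ofReal.mul continuous_const)

lemma cont_entry {w : ℂ → Matrix (Fin N) (Fin N) ℂ} (hw : Continuous w) (i j : Fin N) :
    Continuous fun θ : ℝ => w (Complex.exp (↑θ * Complex.I)) i j := by
  have h1 : Continuous fun ζ : ℂ => w ζ i j :=
    (continuous_apply j).comp ((continuous_apply i).comp hw)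
  exact h1.comp cont_expI

lemma circInt_congr {f g : ℂ → Matrix (Fin N) (Fin N) ℂ}
    (h : ∀ θ : ℝ, f (Complex.exp (↑θ * Complex.I)) = g (Complex.exp (↑θ * Complex.I))) :
    circInt N f = circInt N g := by
  unfold circInt
  congr 1
  funext i j
  congr 1
  have : (fun θ : ℝ => f (Complex.exp (↑θ * Complex.I)) i j)
      = fun θ : ℝ => g (Complex.exp (↑θ * Complex.I)) i j := funext fun θ => by rw [h θ]
  rw [this]

lemma circInt_sum_left {w : ℂ → Matrix (Fin N) (Fin N) ℂ} (hw : Continuous w)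
    {ι : Type} (s : Finset ι) (A : ι → Matrix (Fin N) (Fin N) ℂ) (g : ι → ℂ → ℂ)
    (hg : ∀ i ∈ s, Continuous fun θ : ℝ => g i (Complex.exp (↑θ * Complex.I))) :
    circInt N (fun ζ => ∑ i ∈ s, g i ζ • (A i * w ζ)) =
      ∑ i ∈ s, A i * circInt N (fun ζ => g i ζ • w ζ) := by
  ext p q
  have key : ∀ i ∈ s, (∫ θ in (0:ℝ)..(2*Real.pi),
        g i (Complex.exp (↑θ * Complex.I)) * (A i * w (Complex.exp (↑θ * Complex.I))) p q)
      = ∑ l, A i p l * ∫ θ in (0:ℝ)..(2*Real.pi),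
          g i (Complex.exp (↑θ * Complex.I)) * w (Complex.exp (↑θ * Complex.I)) l q := by
    intro i hi
    have h1 : (fun θ : ℝ => g i (Complex.exp (↑θ * Complex.I)) *
          (A i * w (Complex.exp (↑θ * Complex.I))) p q)
        = fun θ : ℝ => ∑ l, A i p l *
            (g i (Complex.exp (↑θ * Complex.I)) * w (Complex.exp (↑θ * Complex.I)) l q) := by
      funext θ
      rw [Matrix.mul_apply, Finset.mul_sum]
      exact Finset.sum_congr rfl fun l _ => by ring
    rw [h1, intervalIntegral.integral_finset_sum]
    · exact Finset.sum_congr rfl fun l _ => intervalIntegral.integral_const_mul _ _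
    · intro l _
      exact (continuous_const.mul ((hg i hi).mul (cont_entry hw l q))).intervalIntegrable _ _
  simp only [circInt, Matrix.sum_apply, Matrix.smul_apply, Matrix.of_apply, smul_eq_mul]
  rw [intervalIntegral.integral_finset_sum]
  · rw [Finset.smul_sum]
    refine Finset.sum_congr rfl fun i hi => ?_
    rw [Matrix.mul_apply]
    rw [key i hi, Finset.smul_sum]
    refine Finset.sum_congr rfl fun l _ => ?_
    rw [Matrix.of_apply, mul_smul_comm]
  · intro i hi
    have : Continuous fun θ : ℝ => g i (Complex.exp (↑θ * Complex.I)) *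
        (A i * w (Complex.exp (↑θ * Complex.I))) p q := by
      refine (hg i hi).mul ?_
      have : Continuous fun θ : ℝ => ∑ l, A i p l * w (Complex.exp (↑θ * Complex.I)) l q :=
        continuous_finset_sum _ fun l _ => continuous_const.mul (cont_entry hw l q)
      simpa only [Matrix.mul_apply] using this
    exact this.intervalIntegrable _ _

lemma circInt_sum_right {w : ℂ → Matrix (Fin N) (Fin N) ℂ} (hw : Continuous w)
    {ι : Type} (s : Finset ι) (A : ι → Matrix (Fin N) (Fin N) ℂ) (g : ι → ℂ → ℂ)
    (hg : ∀ i ∈ s, Continuous fun θ : ℝ => g i (Complex.exp (↑θ * Complex.I))) :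
    circInt N (fun ζ => ∑ i ∈ s, g i ζ • (w ζ * A i)) =
      ∑ i ∈ s, circInt N (fun ζ => g i ζ • w ζ) * A i := by
  ext p q
  have key : ∀ i ∈ s, (∫ θ in (0:ℝ)..(2*Real.pi),
        g i (Complex.exp (↑θ * Complex.I)) * (w (Complex.exp (↑θ * Complex.I)) * A i) p q)
      = ∑ l, (∫ θ in (0:ℝ)..(2*Real.pi),
          g i (Complex.exp (↑θ * Complex.I)) * w (Complex.exp (↑θ * Complex.I)) p l) * A i l q := by
    intro i hi
    have h1 : (fun θ : ℝ => g i (Complex.exp (↑θ * Complex.I)) *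
          (w (Complex.exp (↑θ * Complex.I)) * A i) p q)
        = fun θ : ℝ => ∑ l, (g i (Complex.exp (↑θ * Complex.I)) *
            w (Complex.exp (↑θ * Complex.I)) p l) * A i l q := by
      funext θ
      rw [Matrix.mul_apply, Finset.mul_sum]
      exact Finset.sum_congr rfl fun l _ => by ring
    rw [h1, intervalIntegral.integral_finset_sum]
    · exact Finset.sum_congr rfl fun l _ => intervalIntegral.integral_mul_const _ _
    · intro l _
      exact (((hg i hi).mul (cont_entry hw p l)).mul continuous_const).intervalIntegrable _ _
  simp only [circInt, Matrix.sum_apply, Matrix.smul_apply, Matrix.of_apply, smul_eq_mul]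
  rw [intervalIntegral.integral_finset_sum]
  · rw [Finset.smul_sum]
    refine Finset.sum_congr rfl fun i hi => ?_
    rw [Matrix.mul_apply]
    rw [key i hi, Finset.smul_sum]
    refine Finset.sum_congr rfl fun l _ => ?_
    rw [Matrix.of_apply, smul_mul_assoc]
  · intro i hi
    have : Continuous fun θ : ℝ => g i (Complex.exp (↑θ * Complex.I)) *
        (w (Complex.exp (↑θ * Complex.I)) * A i) p q := by
      refine (hg i hi).mul ?_
      have : Continuous fun θ : ℝ => ∑ l, w (Complex.exp (↑θ * Complex.I)) p l * A i l q :=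
        continuous_finset_sum _ fun l _ => (cont_entry hw p l).mul continuous_const
      simpa only [Matrix.mul_apply] using this
    exact this.intervalIntegrable _ _

lemma circInt_kadd {w : ℂ → Matrix (Fin N) (Fin N) ℂ} (hw : Continuous w) (g h : ℂ → ℂ)
    (hg : Continuous fun θ : ℝ => g (Complex.exp (↑θ * Complex.I)))
    (hh : Continuous fun θ : ℝ => h (Complex.exp (↑θ * Complex.I))) :
    circInt N (fun ζ => (g ζ + h ζ) • w ζ) =
      circInt N (fun ζ => g ζ • w ζ) + circInt N (fun ζ => h ζ • w ζ) := by
  ext p q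
  simp only [circInt, Matrix.add_apply, Matrix.smul_apply, Matrix.of_apply, smul_eq_mul, add_mul]
  rw [intervalIntegral.integral_add
    (f := fun θ : ℝ => g (Complex.exp (↑θ * Complex.I)) * w (Complex.exp (↑θ * Complex.I)) p q)
    (g := fun θ : ℝ => h (Complex.exp (↑θ * Complex.I)) * w (Complex.exp (↑θ * Complex.I)) p q)
    ((hg.mul (cont_entry hw p q)).intervalIntegrable _ _)
    ((hh.mul (cont_entry hw p q)).intervalIntegrable _ _), smul_add]

lemma circInt_kcmul {w : ℂ → Matrix (Fin N) (Fin N) ℂ} (a : ℂ) (g : ℂ → ℂ) :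
    circInt N (fun ζ => (a * g ζ) • w ζ) = a • circInt N (fun ζ => g ζ • w ζ) := by
  ext p q
  simp only [circInt, Matrix.smul_apply, Matrix.of_apply, smul_eq_mul, mul_assoc]
  rw [intervalIntegral.integral_const_mul, mul_smul_comm]

end Stmt9

namespace Stmt9
variable {N : ℕ}

lemma cont_zpow (m : ℤ) : Continuous fun θ : ℝ => (Complex.exp (↑θ * Complex.I)) ^ m :=
  cont_expI.zpow₀ m fun θ => Or.inl (expI_ne θ)

lemma kernel_ne {z : ℂ} (hz1 : ‖z‖ ≠ 1) (θ : ℝ) :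
    1 - (Complex.exp (↑θ * Complex.I))⁻¹ * z ≠ 0 := by
  intro h
  have h1 : (Complex.exp (↑θ * Complex.I))⁻¹ * z = 1 := by linear_combination -h
  have h2 : z = Complex.exp (↑θ * Complex.I) := by
    field_simp at h1; linear_combination h1
  rw [h2] at hz1
  exact hz1 (Complex.norm_exp_ofReal_mul_I θ)

lemma cont_kernel {z : ℂ} (hz1 : ‖z‖ ≠ 1) :
    Continuous fun θ : ℝ => (1 - (Complex.exp (↑θ * Complex.I))⁻¹ * z)⁻¹ := by
  refine Continuous.inv₀ ?_ (kernel_ne hz1)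
  exact continuous_const.sub ((cont_expI.inv₀ expI_ne).mul continuous_const)

lemma Jmom (w : ℂ → Matrix (Fin N) (Fin N) ℂ) (m : ℤ) :
    circInt N (fun ζ => ζ ^ m • w ζ) = mMoment N w (-m) := by
  rw [mMoment, neg_neg]

lemma Jmom' (w : ℂ → Matrix (Fin N) (Fin N) ℂ) {a j : ℤ} (h : a = -j) :
    circInt N (fun ζ => ζ ^ a • w ζ) = mMoment N w j := by
  subst h; rfl

/-- `T`-kernel integral. -/
def cauchyT (N : ℕ) (w : ℂ → Matrix (Fin N) (Fin N) ℂ) (z : ℂ) (j : ℤ) :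
    Matrix (Fin N) (Fin N) ℂ :=
  circInt N fun ζ => (ζ ^ j * (1 - ζ⁻¹ * z)⁻¹) • w ζ

lemma szVer_eq (P : ℕ → ℕ → Matrix (Fin N) (Fin N) ℂ) (n : ℕ) : szVer P n = P n 0 := by
  unfold szVer mPolyEval
  rw [Finset.sum_eq_single 0]
  · simp
  · intro k _ hk
    rw [zero_pow hk, zero_smul]
  · intro h
    exact absurd (Finset.mem_range.2 (Nat.succ_pos n)) h

/-- expansion of `ζ^m • (poly * w)` at a nonzero point. -/
lemma poly_mul_expand (w : ℂ → Matrix (Fin N) (Fin N) ℂ)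
    (c : ℕ → Matrix (Fin N) (Fin N) ℂ) (n : ℕ) (m : ℤ) {ζ : ℂ} (hζ : ζ ≠ 0) (K : ℂ) :
    (ζ ^ m * K) • (mPolyEval c n ζ * w ζ) =
      ∑ k ∈ Finset.range (n + 1), (ζ ^ (m + (k : ℤ)) * K) • (c k * w ζ) := by
  unfold mPolyEval
  rw [Finset.sum_mul, Finset.smul_sum]
  refine Finset.sum_congr rfl fun k _ => ?_
  rw [smul_mul_assoc, smul_smul, zpow_add₀ hζ, zpow_natCast]
  ring_nf

lemma mul_poly_expand (w : ℂ → Matrix (Fin N) (Fin N) ℂ)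
    (c : ℕ → Matrix (Fin N) (Fin N) ℂ) (n : ℕ) (m : ℤ) {ζ : ℂ} (hζ : ζ ≠ 0) (K : ℂ) :
    (ζ ^ m * K) • (w ζ * mPolyEval c n ζ) =
      ∑ k ∈ Finset.range (n + 1), (ζ ^ (m + (k : ℤ)) * K) • (w ζ * c k) := by
  unfold mPolyEval
  rw [Finset.mul_sum, Finset.smul_sum]
  refine Finset.sum_congr rfl fun k _ => ?_
  rw [mul_smul_comm, smul_smul, zpow_add₀ hζ, zpow_natCast]
  ring_nf

/-- A1: moment form of `∮ ζ^(-j) (P(ζ) w(ζ))`. -/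
lemma A1 {w : ℂ → Matrix (Fin N) (Fin N) ℂ} (hw : Continuous w)
    (c : ℕ → Matrix (Fin N) (Fin N) ℂ) (n : ℕ) (j : ℤ) :
    circInt N (fun ζ => ζ ^ (-j) • (mPolyEval c n ζ * w ζ)) =
      ∑ k ∈ Finset.range (n + 1), c k * mMoment N w (j - (k : ℤ)) := by
  have h1 : circInt N (fun ζ => ζ ^ (-j) • (mPolyEval c n ζ * w ζ)) =
      circInt N (fun ζ => ∑ k ∈ Finset.range (n + 1),
        (fun ζ : ℂ => ζ ^ (-j + (k : ℤ))) ζ • (c k * w ζ)) := by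
    refine circInt_congr fun θ => ?_
    have := poly_mul_expand w c n (-j) (expI_ne θ) 1
    simpa only [mul_one] using this
  rw [h1, circInt_sum_left hw _ _ _ (fun k _ => cont_zpow _)]
  refine Finset.sum_congr rfl fun k _ => ?_
  congr 1
  exact Jmom' w (by omega)

lemma A2 {w : ℂ → Matrix (Fin N) (Fin N) ℂ} (hw : Continuous w)
    (c : ℕ → Matrix (Fin N) (Fin N) ℂ) (n : ℕ) (j : ℤ) :
    circInt N (fun ζ => ζ ^ (-j) • (w ζ * mPolyEval c n ζ)) =
      ∑ k ∈ Finset.range (n + 1), mMoment N w (j - (k : ℤ)) * c k := by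
  have h1 : circInt N (fun ζ => ζ ^ (-j) • (w ζ * mPolyEval c n ζ)) =
      circInt N (fun ζ => ∑ k ∈ Finset.range (n + 1),
        (fun ζ : ℂ => ζ ^ (-j + (k : ℤ))) ζ • (w ζ * c k)) := by
    refine circInt_congr fun θ => ?_
    have := mul_poly_expand w c n (-j) (expI_ne θ) 1
    simpa only [mul_one] using this
  rw [h1, circInt_sum_right hw _ _ _ (fun k _ => cont_zpow _)]
  refine Finset.sum_congr rfl fun k _ => ?_
  congr 1
  exact Jmom' w (by omega)

/-- conjugation on the circle. -/
lemma star_expI (θ : ℝ) :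
    (starRingEnd ℂ) (Complex.exp (↑θ * Complex.I)) = (Complex.exp (↑θ * Complex.I))⁻¹ := by
  rw [← Complex.exp_conj]
  simp only [_root_.map_mul, Complex.conj_ofReal, Complex.conj_I, mul_neg]
  rw [Complex.exp_neg]

/-- A3: moment form of `∮ ζ^j • (P(ζ)ᴴ w(ζ))` (natural-number power). -/
lemma A3 {w : ℂ → Matrix (Fin N) (Fin N) ℂ} (hw : Continuous w)
    (c : ℕ → Matrix (Fin N) (Fin N) ℂ) (n : ℕ) (j : ℕ) :
    circInt N (fun ζ => ζ ^ j • ((mPolyEval c n ζ)ᴴ * w ζ)) =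
      ∑ k ∈ Finset.range (n + 1), (c k)ᴴ * mMoment N w ((k : ℤ) - (j : ℤ)) := by
  have h1 : circInt N (fun ζ => ζ ^ j • ((mPolyEval c n ζ)ᴴ * w ζ)) =
      circInt N (fun ζ => ∑ k ∈ Finset.range (n + 1),
        (fun ζ : ℂ => ζ ^ ((j : ℤ) - (k : ℤ))) ζ • ((c k)ᴴ * w ζ)) := by
    refine circInt_congr fun θ => ?_
    set ζ := Complex.exp (↑θ * Complex.I) with hζdef
    have hζ : ζ ≠ 0 := expI_ne θ
    unfold mPolyEval
    rw [Matrix.conjTranspose_sum, Finset.sum_mul, Finset.smul_sum]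
    refine Finset.sum_congr rfl fun k _ => ?_
    rw [Matrix.conjTranspose_smul, star_def, map_pow, star_expI]
    rw [smul_mul_assoc, smul_smul]
    rw [← zpow_natCast ζ j, ← zpow_natCast ζ⁻¹ k, _root_.inv_zpow, ← _root_.zpow_neg,
      ← zpow_add₀ hζ, Int.sub_eq_add_neg]
  rw [h1, circInt_sum_left hw _ _ _ (fun k _ => cont_zpow _)]
  refine Finset.sum_congr rfl fun k _ => ?_
  congr 1
  exact Jmom' w (by omega)

/-- A4: Cauchy-transform form. -/
lemma A4 {w : ℂ → Matrix (Fin N) (Fin N) ℂ} (hw : Continuous w) {z : ℂ}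
    (hz1 : ‖z‖ ≠ 1) (c : ℕ → Matrix (Fin N) (Fin N) ℂ) (n : ℕ) (m : ℤ) :
    circInt N (fun ζ => (ζ ^ m * (1 - ζ⁻¹ * z)⁻¹) • (mPolyEval c n ζ * w ζ)) =
      ∑ k ∈ Finset.range (n + 1), c k * cauchyT N w z (m + (k : ℤ)) := by
  have h1 : circInt N (fun ζ => (ζ ^ m * (1 - ζ⁻¹ * z)⁻¹) • (mPolyEval c n ζ * w ζ)) =
      circInt N (fun ζ => ∑ k ∈ Finset.range (n + 1),
        (fun ζ : ℂ => ζ ^ (m + (k : ℤ)) * (1 - ζ⁻¹ * z)⁻¹) ζ • (c k * w ζ)) := by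
    refine circInt_congr fun θ => ?_
    exact poly_mul_expand w c n m (expI_ne θ) _
  rw [h1, circInt_sum_left hw _ _ _ (fun k _ => (cont_zpow _).mul (cont_kernel hz1))]
  exact Finset.sum_congr rfl fun k _ => rfl

/-- shift identity for the Cauchy kernel. -/
lemma cauchyT_shift {w : ℂ → Matrix (Fin N) (Fin N) ℂ} (hw : Continuous w) {z : ℂ}
    (hz : z ≠ 0) (hz1 : ‖z‖ ≠ 1) (m : ℤ) :
    cauchyT N w z (m - 1) = z⁻¹ • cauchyT N w z m - z⁻¹ • mMoment N w (-m) := by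
  have h1 : cauchyT N w z (m - 1) =
      circInt N (fun ζ => ((z⁻¹ * (ζ ^ m * (1 - ζ⁻¹ * z)⁻¹)) + (-z⁻¹) * ζ ^ m) • w ζ) := by
    refine circInt_congr fun θ => ?_
    set ζ := Complex.exp (↑θ * Complex.I) with hζdef
    have hζ : ζ ≠ 0 := expI_ne θ
    have hk : 1 - ζ⁻¹ * z ≠ 0 := kernel_ne hz1 θ
    congr 1
    rw [zpow_sub_one₀ hζ]
    have hu : (1 - ζ⁻¹ * z) * (1 - ζ⁻¹ * z)⁻¹ = 1 := mul_inv_cancel₀ hk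
    have hz'' : z⁻¹ * z = 1 := inv_mul_cancel₀ hz
    have hζ'' : ζ⁻¹ * ζ = 1 := inv_mul_cancel₀ hζ
    linear_combination (-(z⁻¹ * ζ ^ m)) * hu + (-(ζ ^ m * ζ⁻¹ * (1 - ζ⁻¹ * z)⁻¹)) * hz''
  rw [h1, circInt_kadd hw (fun ζ => z⁻¹ * (ζ ^ m * (1 - ζ⁻¹ * z)⁻¹)) (fun ζ => -z⁻¹ * ζ ^ m)
      (continuous_const.mul ((cont_zpow m).mul (cont_kernel hz1)))
      (continuous_const.mul (cont_zpow m)),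
    circInt_kcmul z⁻¹ (fun ζ => ζ ^ m * (1 - ζ⁻¹ * z)⁻¹), circInt_kcmul (-z⁻¹) (fun ζ => ζ ^ m),
    Jmom, neg_smul, ← sub_eq_add_neg]
  rfl

end Stmt9

namespace Stmt9
variable {N : ℕ}

/-- Uniqueness: a block row vector orthogonal to the first `n` moment columns vanishes. -/
lemma rowZero {w : ℂ → Matrix (Fin N) (Fin N) ℂ} (hqd : QuasiDef N w)
    (n : ℕ) (hn : 1 ≤ n) (d : ℕ → Matrix (Fin N) (Fin N) ℂ)
    (h : ∀ j : ℕ, j < n → ∑ k ∈ Finset.range n, d k * mMoment N w ((j : ℤ) - (k : ℤ)) = 0) :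
    ∀ k, k < n → d k = 0 := by
  obtain ⟨u, hu⟩ := (hqd n hn).2
  set M : Matrix (Fin n × Fin N) (Fin n × Fin N) ℂ :=
    Matrix.of (fun p q : Fin n × Fin N => mMoment N w ((q.1 : ℤ) - (p.1 : ℤ)) p.2 q.2) with hM
  set D : Matrix (Fin N) (Fin n × Fin N) ℂ := Matrix.of (fun r p => d p.1 r p.2) with hD
  have hDM : D * M = 0 := by
    ext r q
    rw [Matrix.mul_apply, Fintype.sum_prod_type]
    have h3 : (∑ k ∈ Finset.range n, d k * mMoment N w ((q.1 : ℤ) - (k : ℤ))) r q.2 = 0 := by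
      rw [h q.1 q.1.isLt, Matrix.zero_apply]
    rw [Finset.sum_range (fun k => d k * mMoment N w ((q.1 : ℤ) - (k : ℤ)))] at h3
    rw [Matrix.zero_apply, ← h3, Matrix.sum_apply]
    refine Finset.sum_congr rfl fun a _ => ?_
    rw [Matrix.mul_apply]
    rfl
  have hD0 : D = 0 := by
    calc D = D * (M * (↑u⁻¹ : Matrix (Fin n × Fin N) (Fin n × Fin N) ℂ)) := by rw [← hu, Units.mul_inv, Matrix.mul_one]
    _ = (D * M) * (↑u⁻¹ : Matrix (Fin n × Fin N) (Fin n × Fin N) ℂ) := by rw [Matrix.mul_assoc]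
    _ = 0 := by rw [hDM, Matrix.zero_mul]
  intro k hk
  ext r s
  have : D r (⟨k, hk⟩, s) = 0 := by rw [hD0]; rfl
  exact this

/-- The quasi-tau matrices `H^R_n` are invertible. -/
lemma H_unit {w : ℂ → Matrix (Fin N) (Fin N) ℂ} (hw : Continuous w) (hqd : QuasiDef N w)
    (PR1 : ℕ → ℕ → Matrix (Fin N) (Fin N) ℂ) (hPR1 : IsSzPR1 N w PR1) (n : ℕ) :
    IsUnit (szHR N w PR1 n) := by
  have hmom : ∀ j : ℕ, j < n →
      ∑ k ∈ Finset.range (n+1), mMoment N w ((j:ℤ) - (k:ℤ)) * PR1 n k = 0 := by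
    intro j hj
    rw [← A2 hw (PR1 n) n (j:ℤ)]
    exact (hPR1 n).2.2 j hj
  have hHm : szHR N w PR1 n = ∑ k ∈ Finset.range (n+1), mMoment N w ((n:ℤ) - (k:ℤ)) * PR1 n k :=
    A2 hw (PR1 n) n (n:ℤ)
  rw [Matrix.isUnit_iff_isUnit_det, isUnit_iff_ne_zero]
  intro hdet
  obtain ⟨v, hv0, hv⟩ := Matrix.exists_mulVec_eq_zero_iff.mpr hdet
  obtain ⟨u, hu⟩ := (hqd (n+1) (Nat.le_add_left 1 n)).1
  set M : Matrix (Fin (n+1) × Fin N) (Fin (n+1) × Fin N) ℂ :=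
    Matrix.of (fun p q : Fin (n+1) × Fin N => mMoment N w ((p.1 : ℤ) - (q.1 : ℤ)) p.2 q.2) with hM
  set C : Matrix (Fin (n+1) × Fin N) (Fin N) ℂ :=
    Matrix.of (fun p r => PR1 n (p.1 : ℕ) p.2 r) with hC
  have hMC : ∀ p : Fin (n+1) × Fin N, ∀ r : Fin N,
      (M * C) p r = if (p.1 : ℕ) = n then szHR N w PR1 n p.2 r else 0 := by
    intro p r
    have key : (M * C) p r =
        (∑ k ∈ Finset.range (n+1), mMoment N w ((p.1:ℤ) - (k:ℤ)) * PR1 n k) p.2 r := by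
      rw [Matrix.mul_apply, Fintype.sum_prod_type,
        Finset.sum_range (fun k => mMoment N w ((p.1:ℤ) - (k:ℤ)) * PR1 n k), Matrix.sum_apply]
      refine Finset.sum_congr rfl fun a _ => ?_
      rw [Matrix.mul_apply]
      rfl
    rcases Nat.lt_or_ge (p.1 : ℕ) n with hlt | hge
    · rw [key, hmom p.1 hlt, Matrix.zero_apply, if_neg (Nat.ne_of_lt hlt)]
    · have hpn : (p.1 : ℕ) = n := Nat.le_antisymm (Nat.lt_succ_iff.mp p.1.isLt) hge
      rw [key, hpn, if_pos rfl, ← hHm]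
  have hCv : M *ᵥ (C *ᵥ v) = 0 := by
    rw [Matrix.mulVec_mulVec]
    ext p
    have : ((M * C) *ᵥ v) p = ∑ r, (M * C) p r * v r := rfl
    rw [this]
    have : ∑ r, (M * C) p r * v r
        = if (p.1 : ℕ) = n then ∑ r, szHR N w PR1 n p.2 r * v r else 0 := by
      rcases eq_or_ne ((p.1 : ℕ)) n with hpn | hpn
      · rw [if_pos hpn]
        exact Finset.sum_congr rfl fun r _ => by rw [hMC p r, if_pos hpn]
      · rw [if_neg hpn]
        rw [Finset.sum_eq_zero fun r _ => by rw [hMC p r, if_neg hpn, zero_mul]]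
    rw [this]
    rcases eq_or_ne ((p.1 : ℕ)) n with hpn | hpn
    · rw [if_pos hpn, Pi.zero_apply]
      have : ∑ r, szHR N w PR1 n p.2 r * v r = (szHR N w PR1 n *ᵥ v) p.2 := rfl
      rw [this, hv, Pi.zero_apply]
    · rw [if_neg hpn, Pi.zero_apply]
  have hCv0 : C *ᵥ v = 0 := by
    have h6 : (↑u⁻¹ : Matrix _ _ ℂ) *ᵥ (M *ᵥ (C *ᵥ v)) = C *ᵥ v := by
      rw [Matrix.mulVec_mulVec, ← hu, Units.inv_mul, Matrix.one_mulVec]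
    rw [hCv, Matrix.mulVec_zero] at h6
    exact h6.symm
  apply hv0
  ext s
  have h7 : (C *ᵥ v) (⟨n, Nat.lt_succ_self n⟩, s) = v s := by
    have : (C *ᵥ v) (⟨n, Nat.lt_succ_self n⟩, s) = ∑ r, PR1 n n s r * v r := rfl
    rw [this, (hPR1 n).1]
    have : ∑ r, (1 : Matrix (Fin N) (Fin N) ℂ) s r * v r = ((1 : Matrix (Fin N) (Fin N) ℂ) *ᵥ v) s := rfl
    rw [this, Matrix.one_mulVec]
  rw [← h7, hCv0]
  rfl

end Stmt9

/-- the transfer-matrix formula expressing the Riemann–Hilbert matrix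
`Y_n(z)` as the ordered product of the Szegő matrices `R_{n-1}(z) ⋯ R_0(z)` applied to
the initial data. -/
theorem statement9 {N : ℕ} (hN : 1 ≤ N) (w : ℂ → Matrix (Fin N) (Fin N) ℂ)
    (hw : Continuous w) (hqd : QuasiDef N w)
    (PL1 PR1 PR2 : ℕ → ℕ → Matrix (Fin N) (Fin N) ℂ)
    (hPL1 : IsSzPL1 N w PL1) (hPR1 : IsSzPR1 N w PR1) (hPR2 : IsSzPR2 N w PR2) :
    ∀ n : ℕ, 1 ≤ n → ∀ z : ℂ, z ≠ 0 → ‖z‖ ≠ 1 →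
      Matrix.fromBlocks
          (mPolyEval (PL1 n) n z) (szQL1 N w PL1 n z)
          (-((szHR N w PR1 (n-1))⁻¹ * mRecipEval (PR2 (n-1)) (n-1) z))
          (-((szHR N w PR1 (n-1))⁻¹ * szQR2 N w PR2 (n-1) z)) =
        (((List.range n).reverse.map fun k =>
            Matrix.fromBlocks
              (1 + z⁻¹ • (szVer PL1 (k+1) * (szVer PR2 k)ᴴ))
              (-(z⁻¹ • (szVer PL1 (k+1) * szHR N w PR1 k)))
              (-(z⁻¹ • ((szHR N w PR1 k)⁻¹ * (szVer PR2 k)ᴴ)))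
              (z⁻¹ • (1 : Matrix (Fin N) (Fin N) ℂ))).prod) *
          Matrix.fromBlocks (z ^ n • 1) (circInt N fun ζ => (1 - ζ⁻¹ * z)⁻¹ • w ζ) 0 1 := by
  intro n hn z hz hz1
  have hzz : z * z⁻¹ = 1 := mul_inv_cancel₀ hz
  have hzz' : z⁻¹ * z = 1 := inv_mul_cancel₀ hz
  have hα : ∀ m, szVer PL1 m = PL1 m 0 := fun m => Stmt9.szVer_eq PL1 m
  have hβ : ∀ m, szVer PR2 m = PR2 m 0 := fun m => Stmt9.szVer_eq PR2 m
  have mL : ∀ n, PL1 n n = 1 := fun n => (hPL1 n).1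
  have mR1 : ∀ n, PR1 n n = 1 := fun n => (hPR1 n).1
  have mR2 : ∀ n, PR2 n n = 1 := fun n => (hPR2 n).1
  have hHu : ∀ m, IsUnit (szHR N w PR1 m) := Stmt9.H_unit hw hqd PR1 hPR1
  have hHinv : ∀ m, szHR N w PR1 m * (szHR N w PR1 m)⁻¹ = 1 :=
    fun m => Matrix.mul_nonsing_inv _ ((Matrix.isUnit_iff_isUnit_det _).mp (hHu m))
  have hHinv' : ∀ m, (szHR N w PR1 m)⁻¹ * szHR N w PR1 m = 1 :=
    fun m => Matrix.nonsing_inv_mul _ ((Matrix.isUnit_iff_isUnit_det _).mp (hHu m))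
  have oL1 : ∀ m j : ℕ, j < m →
      ∑ k ∈ Finset.range (m+1), PL1 m k * mMoment N w ((j:ℤ) - (k:ℤ)) = 0 := by
    intro m j hj
    rw [← Stmt9.A1 hw (PL1 m) m (j:ℤ)]
    exact (hPL1 m).2.2 j hj
  have oR1 : ∀ m j : ℕ, j < m →
      ∑ k ∈ Finset.range (m+1), mMoment N w ((j:ℤ) - (k:ℤ)) * PR1 m k = 0 := by
    intro m j hj
    rw [← Stmt9.A2 hw (PR1 m) m (j:ℤ)]
    exact (hPR1 m).2.2 j hj
  have oR2 : ∀ m j : ℕ, j < m →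
      ∑ k ∈ Finset.range (m+1), (PR2 m k)ᴴ * mMoment N w ((k:ℤ) - (j:ℤ)) = 0 := by
    intro m j hj
    rw [← Stmt9.A3 hw (PR2 m) m j]
    exact (hPR2 m).2.2 j hj
  have hHm : ∀ m : ℕ, szHR N w PR1 m
      = ∑ k ∈ Finset.range (m+1), mMoment N w ((m:ℤ) - (k:ℤ)) * PR1 m k :=
    fun m => Stmt9.A2 hw (PR1 m) m (m:ℤ)
  have hK : ∀ m : ℕ, ∑ k ∈ Finset.range (m+1), (PR2 m k)ᴴ * mMoment N w ((k:ℤ) - (m:ℤ))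
      = szHR N w PR1 m := by
    intro m
    have hdouble : ∑ j ∈ Finset.range (m+1), (PR2 m j)ᴴ *
          (∑ k ∈ Finset.range (m+1), mMoment N w ((j:ℤ)-(k:ℤ)) * PR1 m k)
        = ∑ k ∈ Finset.range (m+1),
            (∑ j ∈ Finset.range (m+1), (PR2 m j)ᴴ * mMoment N w ((j:ℤ)-(k:ℤ))) * PR1 m k := by
      simp_rw [Finset.mul_sum, Finset.sum_mul, mul_assoc]
      exact Finset.sum_comm
    have hleft : ∑ j ∈ Finset.range (m+1), (PR2 m j)ᴴ *
          (∑ k ∈ Finset.range (m+1), mMoment N w ((j:ℤ)-(k:ℤ)) * PR1 m k)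
        = szHR N w PR1 m := by
      rw [Finset.sum_eq_single_of_mem m (Finset.self_mem_range_succ m)]
      · rw [← hHm m, mR2 m, Matrix.conjTranspose_one, Matrix.one_mul]
      · intro j hj hjm
        rw [oR1 m j (by have := Finset.mem_range.mp hj; omega), Matrix.mul_zero]
    have hright : ∑ k ∈ Finset.range (m+1),
          (∑ j ∈ Finset.range (m+1), (PR2 m j)ᴴ * mMoment N w ((j:ℤ)-(k:ℤ))) * PR1 m k
        = ∑ k ∈ Finset.range (m+1), (PR2 m k)ᴴ * mMoment N w ((k:ℤ) - (m:ℤ)) := by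
      rw [Finset.sum_eq_single_of_mem m (Finset.self_mem_range_succ m)]
      · rw [mR1 m, Matrix.mul_one]
      · intro k hk hkm
        rw [oR2 m k (by have := Finset.mem_range.mp hk; omega), Matrix.zero_mul]
    rw [← hright, ← hdouble, hleft]
  have hQLm : ∀ m : ℕ, szQL1 N w PL1 m z
      = ∑ k ∈ Finset.range (m+1), PL1 m k * Stmt9.cauchyT N w z (-(m:ℤ) + (k:ℤ)) :=
    fun m => Stmt9.A4 hw hz1 (PL1 m) m (-(m:ℤ))
  have hQRm : ∀ m : ℕ, szQR2 N w PR2 m z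
      = ∑ k ∈ Finset.range (m+1), (PR2 m (m-k))ᴴ * Stmt9.cauchyT N w z (-((m:ℤ)+1) + (k:ℤ)) :=
    fun m => Stmt9.A4 hw hz1 (fun k => (PR2 m (m-k))ᴴ) m (-((m:ℤ)+1))
  have hTshift : ∀ m : ℤ, Stmt9.cauchyT N w z (m - 1)
      = z⁻¹ • Stmt9.cauchyT N w z m - z⁻¹ • mMoment N w (-m) :=
    Stmt9.cauchyT_shift hw hz hz1
  have hT0 : Stmt9.cauchyT N w z 0 = circInt N fun ζ => (1 - ζ⁻¹ * z)⁻¹ • w ζ := by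
    refine Stmt9.circInt_congr fun θ => ?_
    rw [zpow_zero, one_mul]
  have hcL : ∀ m : ℕ, 1 ≤ m → ∀ k, k ≤ m+1 →
      PL1 (m+1) k = (if k = 0 then 0 else PL1 m (k-1))
        + (if k ≤ m then szVer PL1 (m+1) * (PR2 m (m-k))ᴴ else 0) := by
    intro m hm
    set d : ℕ → Matrix (Fin N) (Fin N) ℂ := fun k =>
      PL1 (m+1) k - (if k = 0 then 0 else PL1 m (k-1))
        - (if k ≤ m then szVer PL1 (m+1) * (PR2 m (m-k))ᴴ else 0) with hd
    have hd0 : d 0 = 0 := by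
      show (PL1 (m+1) 0 - if (0:ℕ) = 0 then 0 else PL1 m (0-1))
          - (if 0 ≤ m then szVer PL1 (m+1) * (PR2 m (m-0))ᴴ else 0) = 0
      rw [if_pos rfl, if_pos (Nat.zero_le m), Nat.sub_zero, mR2 m,
        Matrix.conjTranspose_one, Matrix.mul_one, hα, sub_zero, sub_self]
    have hdtop : d (m+1) = 0 := by
      show (PL1 (m+1) (m+1) - if m+1 = 0 then 0 else PL1 m (m+1-1))
          - (if m+1 ≤ m then szVer PL1 (m+1) * (PR2 m (m-(m+1)))ᴴ else 0) = 0
      rw [if_neg (Nat.succ_ne_zero m), if_neg (Nat.not_succ_le_self m),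
        Nat.add_sub_cancel, mL (m+1), mL m, sub_zero, sub_self]
    have hfull : ∀ j : ℕ, j < m →
        ∑ k ∈ Finset.range (m+2), d k * mMoment N w (((j:ℤ)+1) - (k:ℤ)) = 0 := by
      intro j hj
      have e1 : ∑ k ∈ Finset.range (m+2), PL1 (m+1) k * mMoment N w (((j:ℤ)+1)-(k:ℤ)) = 0 := by
        have h := oL1 (m+1) (j+1) (by omega)
        push_cast at h
        exact h
      have e2 : ∑ k ∈ Finset.range (m+2),
          (if k = 0 then (0 : Matrix (Fin N) (Fin N) ℂ) else PL1 m (k-1))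
            * mMoment N w (((j:ℤ)+1)-(k:ℤ)) = 0 := by
        rw [Finset.sum_range_succ']
        have hif : ∀ k : ℕ, (if k + 1 = 0 then (0 : Matrix (Fin N) (Fin N) ℂ)
            else PL1 m (k+1-1)) = PL1 m k :=
          fun k => by rw [if_neg (Nat.succ_ne_zero k), Nat.add_sub_cancel]
        simp only [hif, eq_self_iff_true, if_true, zero_mul, add_zero]
        refine Eq.trans (Finset.sum_congr rfl fun k _ => ?_) (oL1 m j hj)
        have hidx : ((j:ℤ)+1) - ((k+1 : ℕ):ℤ) = (j:ℤ) - (k:ℤ) := by push_cast; ring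
        rw [hidx]
      have e3 : ∑ k ∈ Finset.range (m+2),
          (if k ≤ m then szVer PL1 (m+1) * (PR2 m (m-k))ᴴ else 0)
            * mMoment N w (((j:ℤ)+1)-(k:ℤ)) = 0 := by
        rw [Finset.sum_range_succ, if_neg (Nat.not_succ_le_self m), Matrix.zero_mul, add_zero]
        have hsum : ∑ k ∈ Finset.range (m+1),
            (if k ≤ m then szVer PL1 (m+1) * (PR2 m (m-k))ᴴ else 0)
              * mMoment N w (((j:ℤ)+1)-(k:ℤ))
            = szVer PL1 (m+1) * ∑ k ∈ Finset.range (m+1),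
                (PR2 m (m-k))ᴴ * mMoment N w (((j:ℤ)+1)-(k:ℤ)) := by
          rw [Finset.mul_sum]
          refine Finset.sum_congr rfl fun k hk => ?_
          rw [if_pos (Nat.lt_succ_iff.mp (Finset.mem_range.mp hk)), Matrix.mul_assoc]
        rw [hsum]
        have hrefl : ∑ k ∈ Finset.range (m+1),
            (PR2 m (m-k))ᴴ * mMoment N w (((j:ℤ)+1)-(k:ℤ))
            = ∑ k ∈ Finset.range (m+1),
                (PR2 m k)ᴴ * mMoment N w ((k:ℤ) - ((m-(j+1) : ℕ):ℤ)) := by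
          rw [← Finset.sum_range_reflect
            (fun k => (PR2 m k)ᴴ * mMoment N w ((k:ℤ) - ((m-(j+1) : ℕ):ℤ))) (m+1)]
          refine Finset.sum_congr rfl fun k hk => ?_
          have hk' : k ≤ m := Nat.lt_succ_iff.mp (Finset.mem_range.mp hk)
          have hidx1 : m + 1 - 1 - k = m - k := by omega
          have hidx2 : ((j:ℤ)+1) - (k:ℤ) = ((m-k : ℕ):ℤ) - ((m-(j+1) : ℕ):ℤ) := by omega
          rw [hidx1, hidx2]
        rw [hrefl, oR2 m (m-(j+1)) (by omega), Matrix.mul_zero]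
      have hsplit : ∑ k ∈ Finset.range (m+2), d k * mMoment N w (((j:ℤ)+1) - (k:ℤ))
          = (∑ k ∈ Finset.range (m+2), PL1 (m+1) k * mMoment N w (((j:ℤ)+1)-(k:ℤ)))
            - (∑ k ∈ Finset.range (m+2),
                (if k = 0 then (0 : Matrix (Fin N) (Fin N) ℂ) else PL1 m (k-1))
                  * mMoment N w (((j:ℤ)+1)-(k:ℤ)))
            - (∑ k ∈ Finset.range (m+2),
                (if k ≤ m then szVer PL1 (m+1) * (PR2 m (m-k))ᴴ else 0)
                  * mMoment N w (((j:ℤ)+1)-(k:ℤ))) := by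
        rw [← Finset.sum_sub_distrib, ← Finset.sum_sub_distrib]
        refine Finset.sum_congr rfl fun k _ => ?_
        rw [hd]
        rw [Matrix.sub_mul, Matrix.sub_mul]
      rw [hsplit, e1, e2, e3, sub_zero, sub_zero]
    have hmid : ∀ k, k < m → d (k+1) = 0 := by
      refine Stmt9.rowZero hqd m hm (fun k => d (k+1)) ?_
      intro j hj
      have h9 := hfull j hj
      rw [Finset.sum_range_succ'] at h9
      rw [hd0, zero_mul, add_zero, Finset.sum_range_succ, hdtop, zero_mul, add_zero] at h9
      rw [← h9]
      refine Finset.sum_congr rfl fun k _ => ?_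
      have hidx : (j:ℤ) - (k:ℤ) = ((j:ℤ)+1) - ((k+1:ℕ):ℤ) := by push_cast; ring
      rw [hidx]
    intro k hk
    have hdk : d k = 0 := by
      rcases Nat.eq_zero_or_pos k with h0 | hpos
      · rw [h0]; exact hd0
      · rcases Nat.lt_or_ge k (m+1) with hlt | hge
        · obtain ⟨k', rfl⟩ : ∃ k', k = k' + 1 := ⟨k - 1, by omega⟩
          exact hmid k' (by omega)
        · have : k = m+1 := by omega
          rw [this]; exact hdtop
    have h2 : (PL1 (m+1) k - if k = 0 then 0 else PL1 m (k-1))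
        - (if k ≤ m then szVer PL1 (m+1) * (PR2 m (m-k))ᴴ else 0) = 0 := hdk
    rw [sub_sub, sub_eq_zero] at h2
    exact h2
  have hcR : ∀ m : ℕ, ∀ k, k ≤ m+1 →
      (PR2 (m+1) (m+1-k))ᴴ = (szVer PR2 (m+1))ᴴ * PL1 (m+1) k
        + (if k ≤ m then (szHR N w PR1 (m+1) * (szHR N w PR1 m)⁻¹) * (PR2 m (m-k))ᴴ else 0) := by
    intro m
    set C : Matrix (Fin N) (Fin N) ℂ := szHR N w PR1 (m+1) * (szHR N w PR1 m)⁻¹ with hC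
    set d : ℕ → Matrix (Fin N) (Fin N) ℂ := fun k =>
      (PR2 (m+1) (m+1-k))ᴴ - (szVer PR2 (m+1))ᴴ * PL1 (m+1) k
        - (if k ≤ m then C * (PR2 m (m-k))ᴴ else 0) with hd
    have hdtop : d (m+1) = 0 := by
      show (PR2 (m+1) (m+1-(m+1)))ᴴ - (szVer PR2 (m+1))ᴴ * PL1 (m+1) (m+1)
        - (if m+1 ≤ m then C * (PR2 m (m-(m+1)))ᴴ else 0) = 0
      rw [Nat.sub_self, if_neg (Nat.not_succ_le_self m), mL (m+1), Matrix.mul_one, hβ,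
        sub_zero, sub_self]
    -- the three pieces of the full orthogonality sum
    have e1 : ∀ j : ℕ, j ≤ m →
        ∑ k ∈ Finset.range (m+2), (PR2 (m+1) (m+1-k))ᴴ * mMoment N w ((j:ℤ)-(k:ℤ))
        = if j = 0 then szHR N w PR1 (m+1) else 0 := by
      intro j hj
      have hrefl : ∑ k ∈ Finset.range (m+2), (PR2 (m+1) (m+1-k))ᴴ * mMoment N w ((j:ℤ)-(k:ℤ))
          = ∑ k ∈ Finset.range (m+2),
              (PR2 (m+1) k)ᴴ * mMoment N w ((k:ℤ) - ((m+1-j : ℕ):ℤ)) := by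
        rw [← Finset.sum_range_reflect
          (fun k => (PR2 (m+1) k)ᴴ * mMoment N w ((k:ℤ) - ((m+1-j : ℕ):ℤ))) (m+2)]
        refine Finset.sum_congr rfl fun k hk => ?_
        have hk' : k ≤ m+1 := Nat.lt_succ_iff.mp (Finset.mem_range.mp hk)
        have hidx1 : m + 2 - 1 - k = m+1-k := by omega
        have hidx2 : (j:ℤ) - (k:ℤ) = ((m+1-k : ℕ):ℤ) - ((m+1-j : ℕ):ℤ) := by omega
        rw [hidx1, hidx2]
      rw [hrefl]
      rcases eq_or_ne j 0 with h0 | h0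
      · rw [if_pos h0, h0, Nat.sub_zero]
        have := hK (m+1)
        push_cast at this ⊢
        exact this
      · rw [if_neg h0]
        exact oR2 (m+1) (m+1-j) (by omega)
    have e2 : ∀ j : ℕ, j ≤ m →
        ∑ k ∈ Finset.range (m+2), ((szVer PR2 (m+1))ᴴ * PL1 (m+1) k) * mMoment N w ((j:ℤ)-(k:ℤ))
        = 0 := by
      intro j hj
      have : ∑ k ∈ Finset.range (m+2), ((szVer PR2 (m+1))ᴴ * PL1 (m+1) k) * mMoment N w ((j:ℤ)-(k:ℤ))
          = (szVer PR2 (m+1))ᴴ * ∑ k ∈ Finset.range (m+2), PL1 (m+1) k * mMoment N w ((j:ℤ)-(k:ℤ)) := by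
        rw [Finset.mul_sum]
        exact Finset.sum_congr rfl fun k _ => by rw [Matrix.mul_assoc]
      rw [this, oL1 (m+1) j (by omega), Matrix.mul_zero]
    have e3 : ∀ j : ℕ, j ≤ m →
        ∑ k ∈ Finset.range (m+2), (if k ≤ m then C * (PR2 m (m-k))ᴴ else 0) * mMoment N w ((j:ℤ)-(k:ℤ))
        = if j = 0 then szHR N w PR1 (m+1) else 0 := by
      intro j hj
      rw [Finset.sum_range_succ, if_neg (Nat.not_succ_le_self m), Matrix.zero_mul, add_zero]
      have hstep : ∑ k ∈ Finset.range (m+1),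
          (if k ≤ m then C * (PR2 m (m-k))ᴴ else 0) * mMoment N w ((j:ℤ)-(k:ℤ))
          = C * ∑ k ∈ Finset.range (m+1), (PR2 m k)ᴴ * mMoment N w ((k:ℤ) - ((m-j : ℕ):ℤ)) := by
        rw [Finset.mul_sum, ← Finset.sum_range_reflect
          (fun k => C * ((PR2 m k)ᴴ * mMoment N w ((k:ℤ) - ((m-j : ℕ):ℤ)))) (m+1)]
        refine Finset.sum_congr rfl fun k hk => ?_
        have hk' : k ≤ m := Nat.lt_succ_iff.mp (Finset.mem_range.mp hk)
        have hidx1 : m + 1 - 1 - k = m-k := by omega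
        have hidx2 : (j:ℤ) - (k:ℤ) = ((m-k : ℕ):ℤ) - ((m-j : ℕ):ℤ) := by omega
        rw [if_pos hk', hidx1, hidx2, Matrix.mul_assoc]
      rw [hstep]
      rcases eq_or_ne j 0 with h0 | h0
      · rw [if_pos h0, h0, Nat.sub_zero, hK m, hC, Matrix.mul_assoc, hHinv' m, Matrix.mul_one]
      · rw [if_neg h0, oR2 m (m-j) (by omega), Matrix.mul_zero]
    have hfull : ∀ j : ℕ, j ≤ m →
        ∑ k ∈ Finset.range (m+2), d k * mMoment N w ((j:ℤ) - (k:ℤ)) = 0 := by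
      intro j hj
      have hsplit : ∑ k ∈ Finset.range (m+2), d k * mMoment N w ((j:ℤ) - (k:ℤ))
          = (∑ k ∈ Finset.range (m+2), (PR2 (m+1) (m+1-k))ᴴ * mMoment N w ((j:ℤ)-(k:ℤ)))
            - (∑ k ∈ Finset.range (m+2),
                ((szVer PR2 (m+1))ᴴ * PL1 (m+1) k) * mMoment N w ((j:ℤ)-(k:ℤ)))
            - (∑ k ∈ Finset.range (m+2),
                (if k ≤ m then C * (PR2 m (m-k))ᴴ else 0) * mMoment N w ((j:ℤ)-(k:ℤ))) := by
        rw [← Finset.sum_sub_distrib, ← Finset.sum_sub_distrib]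
        refine Finset.sum_congr rfl fun k _ => ?_
        rw [hd]
        rw [Matrix.sub_mul, Matrix.sub_mul]
      rw [hsplit, e1 j hj, e2 j hj, e3 j hj, sub_zero, sub_self]
    have hmid : ∀ k, k < m+1 → d k = 0 := by
      refine Stmt9.rowZero hqd (m+1) (Nat.le_add_left 1 m) d ?_
      intro j hj
      have h9 := hfull j (by omega)
      rw [Finset.sum_range_succ, hdtop, zero_mul, add_zero] at h9
      exact h9
    intro k hk
    have hdk : d k = 0 := by
      rcases Nat.lt_or_ge k (m+1) with hlt | hge
      · exact hmid k hlt
      · have : k = m+1 := by omega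
        rw [this]; exact hdtop
    have h2 : (PR2 (m+1) (m+1-k))ᴴ - (szVer PR2 (m+1))ᴴ * PL1 (m+1) k
        - (if k ≤ m then C * (PR2 m (m-k))ᴴ else 0) = 0 := hdk
    rw [sub_sub, sub_eq_zero] at h2
    exact h2
  have hPrec : ∀ m : ℕ, 1 ≤ m → ∀ x : ℂ, mPolyEval (PL1 (m+1)) (m+1) x
      = x • mPolyEval (PL1 m) m x + szVer PL1 (m+1) * mRecipEval (PR2 m) m x := by
    intro m hm x
    unfold mPolyEval
    have hco : ∀ k ∈ Finset.range (m+2), x ^ k • PL1 (m+1) k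
        = x ^ k • (if k = 0 then (0 : Matrix (Fin N) (Fin N) ℂ) else PL1 m (k-1))
          + x ^ k • (if k ≤ m then szVer PL1 (m+1) * (PR2 m (m-k))ᴴ else 0) := by
      intro k hk
      rw [hcL m hm k (Nat.lt_succ_iff.mp (Finset.mem_range.mp hk)), smul_add]
    rw [Finset.sum_congr rfl hco, Finset.sum_add_distrib]
    congr 1
    · -- shift part
      rw [Finset.sum_range_succ']
      have hif : ∀ k : ℕ, (x ^ (k+1)) • (if k + 1 = 0 then (0 : Matrix (Fin N) (Fin N) ℂ)
          else PL1 m (k+1-1)) = x • (x ^ k • PL1 m k) := fun k => by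
        rw [if_neg (Nat.succ_ne_zero k), Nat.add_sub_cancel, pow_succ', mul_smul]
      simp only [hif, eq_self_iff_true, if_true, smul_zero, add_zero]
      rw [← Finset.smul_sum]
    · -- reciprocal part
      rw [Finset.sum_range_succ, if_neg (Nat.not_succ_le_self m), smul_zero, add_zero]
      unfold mRecipEval
      rw [Finset.mul_sum]
      refine Finset.sum_congr rfl fun k hk => ?_
      rw [if_pos (Nat.lt_succ_iff.mp (Finset.mem_range.mp hk)), mul_smul_comm]
  have hRrec : ∀ m : ℕ, ∀ x : ℂ, mRecipEval (PR2 (m+1)) (m+1) x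
      = (szVer PR2 (m+1))ᴴ * mPolyEval (PL1 (m+1)) (m+1) x
        + (szHR N w PR1 (m+1) * (szHR N w PR1 m)⁻¹) * mRecipEval (PR2 m) m x := by
    intro m x
    unfold mRecipEval
    have hco : ∀ k ∈ Finset.range (m+2), x ^ k • (PR2 (m+1) (m+1-k))ᴴ
        = x ^ k • ((szVer PR2 (m+1))ᴴ * PL1 (m+1) k)
          + x ^ k • (if k ≤ m then
              (szHR N w PR1 (m+1) * (szHR N w PR1 m)⁻¹) * (PR2 m (m-k))ᴴ else 0) := by
      intro k hk
      rw [hcR m k (Nat.lt_succ_iff.mp (Finset.mem_range.mp hk)), smul_add]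
    rw [Finset.sum_congr rfl hco, Finset.sum_add_distrib]
    congr 1
    · unfold mPolyEval
      rw [Finset.mul_sum]
      exact Finset.sum_congr rfl fun k _ => by rw [mul_smul_comm]
    · rw [Finset.sum_range_succ, if_neg (Nat.not_succ_le_self m), smul_zero, add_zero,
        Finset.mul_sum]
      refine Finset.sum_congr rfl fun k hk => ?_
      rw [if_pos (Nat.lt_succ_iff.mp (Finset.mem_range.mp hk)), mul_smul_comm]
  have hQLrec : ∀ m : ℕ, 1 ≤ m → szQL1 N w PL1 (m+1) z
      = szQL1 N w PL1 m z + szVer PL1 (m+1) * szQR2 N w PR2 m z := by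
    intro m hm
    rw [hQLm (m+1)]
    have hco : ∀ k ∈ Finset.range (m+2),
        PL1 (m+1) k * Stmt9.cauchyT N w z (-((m+1:ℕ):ℤ) + (k:ℤ))
        = (if k = 0 then (0:Matrix (Fin N) (Fin N) ℂ) else PL1 m (k-1))
            * Stmt9.cauchyT N w z (-((m+1:ℕ):ℤ) + (k:ℤ))
          + (if k ≤ m then szVer PL1 (m+1) * (PR2 m (m-k))ᴴ else 0)
            * Stmt9.cauchyT N w z (-((m+1:ℕ):ℤ) + (k:ℤ)) := by
      intro k hk
      rw [hcL m hm k (Nat.lt_succ_iff.mp (Finset.mem_range.mp hk)), Matrix.add_mul]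
    rw [Finset.sum_congr rfl hco, Finset.sum_add_distrib]
    congr 1
    · -- shift part = szQL1 m z
      rw [Finset.sum_range_succ']
      have hif : ∀ k : ℕ, (if k + 1 = 0 then (0:Matrix (Fin N) (Fin N) ℂ) else PL1 m (k+1-1))
            * Stmt9.cauchyT N w z (-((m+1:ℕ):ℤ) + ((k+1:ℕ):ℤ))
          = PL1 m k * Stmt9.cauchyT N w z (-(m:ℤ) + (k:ℤ)) := fun k => by
        rw [if_neg (Nat.succ_ne_zero k), Nat.add_sub_cancel]
        have hidx : (-((m+1:ℕ):ℤ) + ((k+1:ℕ):ℤ)) = -(m:ℤ) + (k:ℤ) := by push_cast; ring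
        rw [hidx]
      simp only [hif, eq_self_iff_true, if_true, zero_mul, add_zero]
      exact (hQLm m).symm
    · -- reciprocal part = szVer PL1 (m+1) * szQR2 m z
      rw [Finset.sum_range_succ, if_neg (Nat.not_succ_le_self m), Matrix.zero_mul, add_zero,
        hQRm m, Finset.mul_sum]
      refine Finset.sum_congr rfl fun k hk => ?_
      rw [if_pos (Nat.lt_succ_iff.mp (Finset.mem_range.mp hk)), Matrix.mul_assoc]
      have hidx : (-((m+1:ℕ):ℤ) + (k:ℤ)) = -((m:ℤ)+1) + (k:ℤ) := by push_cast; ring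
      rw [hidx]
  have hQRrec : ∀ m : ℕ, szQR2 N w PR2 (m+1) z
      = z⁻¹ • ((szVer PR2 (m+1))ᴴ * szQL1 N w PL1 (m+1) z
        + (szHR N w PR1 (m+1) * (szHR N w PR1 m)⁻¹) * szQR2 N w PR2 m z) := by
    intro m
    set B : Matrix (Fin N) (Fin N) ℂ := (szVer PR2 (m+1))ᴴ with hB
    set C : Matrix (Fin N) (Fin N) ℂ := szHR N w PR1 (m+1) * (szHR N w PR1 m)⁻¹ with hC
    set G : Matrix (Fin N) (Fin N) ℂ :=
      ∑ k ∈ Finset.range (m+2), PL1 (m+1) k * mMoment N w (((m+1:ℕ):ℤ) - (k:ℤ)) with hG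
    set L : Matrix (Fin N) (Fin N) ℂ :=
      ∑ k ∈ Finset.range (m+1), (PR2 m (m-k))ᴴ * mMoment N w (((m+1:ℕ):ℤ) - (k:ℤ)) with hL
    have hTs : ∀ k : ℕ, Stmt9.cauchyT N w z (-(((m+1:ℕ):ℤ)+1) + (k:ℤ))
        = z⁻¹ • Stmt9.cauchyT N w z (-((m+1:ℕ):ℤ) + (k:ℤ))
          - z⁻¹ • mMoment N w (((m+1:ℕ):ℤ) - (k:ℤ)) := by
      intro k
      have h := hTshift (-((m+1:ℕ):ℤ) + (k:ℤ))
      have h1 : (-((m+1:ℕ):ℤ) + (k:ℤ)) - 1 = -(((m+1:ℕ):ℤ)+1) + (k:ℤ) := by ring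
      have h2 : -(-((m+1:ℕ):ℤ) + (k:ℤ)) = ((m+1:ℕ):ℤ) - (k:ℤ) := by ring
      rw [h1, h2] at h
      exact h
    have hTs2 : ∀ k : ℕ, Stmt9.cauchyT N w z (-(((m+1:ℕ):ℤ)+1) + (k:ℤ))
        = z⁻¹ • Stmt9.cauchyT N w z (-((m:ℤ)+1) + (k:ℤ))
          - z⁻¹ • mMoment N w (((m+1:ℕ):ℤ) - (k:ℤ)) := by
      intro k
      have h := hTs k
      have h1 : (-((m+1:ℕ):ℤ) + (k:ℤ)) = -((m:ℤ)+1) + (k:ℤ) := by push_cast; ring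
      rw [h1] at h
      exact h
    have hzero : B * G + C * L = 0 := by
      have hstep : B * G + C * L = ∑ k ∈ Finset.range (m+2),
          (B * PL1 (m+1) k + (if k ≤ m then C * (PR2 m (m-k))ᴴ else 0))
            * mMoment N w (((m+1:ℕ):ℤ) - (k:ℤ)) := by
        rw [hG, hL, Finset.mul_sum, Finset.mul_sum]
        have hCL : ∑ k ∈ Finset.range (m+1),
            C * ((PR2 m (m-k))ᴴ * mMoment N w (((m+1:ℕ):ℤ) - (k:ℤ)))
            = ∑ k ∈ Finset.range (m+2), (if k ≤ m then C * (PR2 m (m-k))ᴴ else 0)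
                * mMoment N w (((m+1:ℕ):ℤ) - (k:ℤ)) := by
          symm
          rw [Finset.sum_range_succ, if_neg (Nat.not_succ_le_self m), Matrix.zero_mul, add_zero]
          refine Finset.sum_congr rfl fun k hk => ?_
          rw [if_pos (Nat.lt_succ_iff.mp (Finset.mem_range.mp hk)), Matrix.mul_assoc]
        rw [hCL, ← Finset.sum_add_distrib]
        refine Finset.sum_congr rfl fun k _ => ?_
        rw [Matrix.add_mul, ← Matrix.mul_assoc B _ _]
      have hback : ∀ k ∈ Finset.range (m+2),
          (B * PL1 (m+1) k + (if k ≤ m then C * (PR2 m (m-k))ᴴ else 0))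
            * mMoment N w (((m+1:ℕ):ℤ) - (k:ℤ))
          = (PR2 (m+1) (m+1-k))ᴴ * mMoment N w (((m+1:ℕ):ℤ) - (k:ℤ)) := by
        intro k hk
        rw [← hcR m k (Nat.lt_succ_iff.mp (Finset.mem_range.mp hk))]
      rw [hstep, Finset.sum_congr rfl hback]
      have hrefl : ∑ k ∈ Finset.range (m+2),
          (PR2 (m+1) (m+1-k))ᴴ * mMoment N w (((m+1:ℕ):ℤ) - (k:ℤ))
          = ∑ k ∈ Finset.range (m+2), (PR2 (m+1) k)ᴴ * mMoment N w ((k:ℤ) - ((0:ℕ):ℤ)) := by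
        rw [← Finset.sum_range_reflect
          (fun k => (PR2 (m+1) k)ᴴ * mMoment N w ((k:ℤ) - ((0:ℕ):ℤ))) (m+2)]
        refine Finset.sum_congr rfl fun k hk => ?_
        have hk' : k ≤ m+1 := Nat.lt_succ_iff.mp (Finset.mem_range.mp hk)
        have hidx1 : m + 2 - 1 - k = m+1-k := by omega
        have hidx2 : ((m+1:ℕ):ℤ) - (k:ℤ) = ((m+1-k:ℕ):ℤ) - ((0:ℕ):ℤ) := by omega
        rw [hidx1, hidx2]
      rw [hrefl]
      exact oR2 (m+1) 0 (Nat.succ_pos m)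
    -- main computation
    rw [hQRm (m+1)]
    have hco : ∀ k ∈ Finset.range (m+2),
        (PR2 (m+1) (m+1-k))ᴴ * Stmt9.cauchyT N w z (-(((m+1:ℕ):ℤ)+1) + (k:ℤ))
        = (B * PL1 (m+1) k) * Stmt9.cauchyT N w z (-(((m+1:ℕ):ℤ)+1) + (k:ℤ))
          + (if k ≤ m then C * (PR2 m (m-k))ᴴ else 0)
            * Stmt9.cauchyT N w z (-(((m+1:ℕ):ℤ)+1) + (k:ℤ)) := by
      intro k hk
      rw [hcR m k (Nat.lt_succ_iff.mp (Finset.mem_range.mp hk)), Matrix.add_mul]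
    rw [Finset.sum_congr rfl hco, Finset.sum_add_distrib]
    have hpart1 : ∑ k ∈ Finset.range (m+2),
        (B * PL1 (m+1) k) * Stmt9.cauchyT N w z (-(((m+1:ℕ):ℤ)+1) + (k:ℤ))
        = z⁻¹ • (B * szQL1 N w PL1 (m+1) z) - z⁻¹ • (B * G) := by
      have hterm : ∀ k ∈ Finset.range (m+2),
          (B * PL1 (m+1) k) * Stmt9.cauchyT N w z (-(((m+1:ℕ):ℤ)+1) + (k:ℤ))
          = z⁻¹ • (B * (PL1 (m+1) k * Stmt9.cauchyT N w z (-((m+1:ℕ):ℤ) + (k:ℤ))))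
            - z⁻¹ • (B * (PL1 (m+1) k * mMoment N w (((m+1:ℕ):ℤ) - (k:ℤ)))) := by
        intro k _
        rw [hTs k]
        simp only [Matrix.mul_sub, Matrix.mul_smul, Matrix.mul_assoc]
      rw [Finset.sum_congr rfl hterm, Finset.sum_sub_distrib, ← Finset.smul_sum,
        ← Finset.smul_sum, ← Finset.mul_sum, ← Finset.mul_sum, ← hQLm (m+1), hG]
    have hpart2 : ∑ k ∈ Finset.range (m+2),
        (if k ≤ m then C * (PR2 m (m-k))ᴴ else 0)
          * Stmt9.cauchyT N w z (-(((m+1:ℕ):ℤ)+1) + (k:ℤ))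
        = z⁻¹ • (C * szQR2 N w PR2 m z) - z⁻¹ • (C * L) := by
      rw [Finset.sum_range_succ, if_neg (Nat.not_succ_le_self m), Matrix.zero_mul, add_zero]
      have hterm : ∀ k ∈ Finset.range (m+1),
          (if k ≤ m then C * (PR2 m (m-k))ᴴ else 0)
            * Stmt9.cauchyT N w z (-(((m+1:ℕ):ℤ)+1) + (k:ℤ))
          = z⁻¹ • (C * ((PR2 m (m-k))ᴴ * Stmt9.cauchyT N w z (-((m:ℤ)+1) + (k:ℤ))))
            - z⁻¹ • (C * ((PR2 m (m-k))ᴴ * mMoment N w (((m+1:ℕ):ℤ) - (k:ℤ)))) := by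
        intro k hk
        rw [if_pos (Nat.lt_succ_iff.mp (Finset.mem_range.mp hk)), hTs2 k]
        simp only [Matrix.mul_sub, Matrix.mul_smul, Matrix.mul_assoc]
      rw [Finset.sum_congr rfl hterm, Finset.sum_sub_distrib, ← Finset.smul_sum,
        ← Finset.smul_sum, ← Finset.mul_sum, ← Finset.mul_sum, ← hQRm m, hL]
    rw [hpart1, hpart2, smul_add]
    have hz0 : z⁻¹ • (B * G) + z⁻¹ • (C * L) = 0 := by
      rw [← smul_add, hzero, smul_zero]
    have : z⁻¹ • (B * szQL1 N w PL1 (m+1) z) - z⁻¹ • (B * G)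
        + (z⁻¹ • (C * szQR2 N w PR2 m z) - z⁻¹ • (C * L))
        = z⁻¹ • (B * szQL1 N w PL1 (m+1) z) + z⁻¹ • (C * szQR2 N w PR2 m z)
          - (z⁻¹ • (B * G) + z⁻¹ • (C * L)) := by abel
    rw [this, hz0, sub_zero]
  set S : Matrix (Fin N) (Fin N) ℂ := circInt N fun ζ => (1 - ζ⁻¹ * z)⁻¹ • w ζ with hS
  set R : ℕ → Matrix (Fin N ⊕ Fin N) (Fin N ⊕ Fin N) ℂ := fun k =>
    Matrix.fromBlocks
      (1 + z⁻¹ • (szVer PL1 (k+1) * (szVer PR2 k)ᴴ))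
      (-(z⁻¹ • (szVer PL1 (k+1) * szHR N w PR1 k)))
      (-(z⁻¹ • ((szHR N w PR1 k)⁻¹ * (szVer PR2 k)ᴴ)))
      (z⁻¹ • (1 : Matrix (Fin N) (Fin N) ℂ)) with hR
  have hprod : ∀ m : ℕ, ((List.range (m+1)).reverse.map R).prod
      = R m * ((List.range m).reverse.map R).prod := by
    intro m
    rw [List.range_succ, List.reverse_append]
    simp
  have key1 : ∀ X Y : Matrix (Fin N) (Fin N) ℂ, (z⁻¹ • X) * (z • Y) = X * Y := by
    intro X Y
    rw [smul_mul_assoc, mul_smul_comm, smul_smul, hzz', one_smul]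
  have key2 : ∀ X : Matrix (Fin N) (Fin N) ℂ, X * (z • (1 : Matrix (Fin N) (Fin N) ℂ)) = z • X := by
    intro X
    rw [mul_smul_comm, mul_one]
  have main : ∀ m : ℕ, 1 ≤ m →
      Matrix.fromBlocks (mPolyEval (PL1 m) m z) (szQL1 N w PL1 m z)
        (-((szHR N w PR1 (m-1))⁻¹ * mRecipEval (PR2 (m-1)) (m-1) z))
        (-((szHR N w PR1 (m-1))⁻¹ * szQR2 N w PR2 (m-1) z))
      = ((List.range m).reverse.map R).prod * Matrix.fromBlocks (z ^ m • 1) S 0 1 := by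
    intro m hm
    induction m, hm using Nat.le_induction with
    | base =>
      have hP1 : mPolyEval (PL1 1) 1 z = PL1 1 0 + z • (1 : Matrix (Fin N) (Fin N) ℂ) := by
        unfold mPolyEval
        rw [Finset.sum_range_succ, Finset.sum_range_one, pow_zero, pow_one, one_smul, mL 1]
      have hrec0 : mRecipEval (PR2 0) 0 z = 1 := by
        unfold mRecipEval
        rw [Finset.sum_range_one, pow_zero, one_smul, Nat.sub_self, mR2 0,
          Matrix.conjTranspose_one]
      have hH0 : mMoment N w 0 = szHR N w PR1 0 := by
        rw [hHm 0, Finset.sum_range_one, mR1 0, Matrix.mul_one]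
        norm_num
      have hTm1 : Stmt9.cauchyT N w z (-1) = z⁻¹ • S - z⁻¹ • szHR N w PR1 0 := by
        have h := hTshift 0
        norm_num at h
        rw [hT0, hH0] at h
        exact h
      have hQL1 : szQL1 N w PL1 1 z
          = PL1 1 0 * Stmt9.cauchyT N w z (-1) + Stmt9.cauchyT N w z 0 := by
        have h := hQLm 1
        rw [Finset.sum_range_succ, Finset.sum_range_one, mL 1, Matrix.one_mul] at h
        norm_num at h
        exact h
      have hQR0 : szQR2 N w PR2 0 z = Stmt9.cauchyT N w z (-1) := by
        have h := hQRm 0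
        rw [Finset.sum_range_one, Nat.sub_self, mR2 0, Matrix.conjTranspose_one,
          Matrix.one_mul] at h
        norm_num at h
        exact h
      have hlist : ((List.range 1).reverse.map R).prod = R 0 := by
        rw [List.range_succ]
        simp
      rw [hlist, hR]
      simp only [Nat.sub_self, Nat.zero_add, zero_add]
      rw [Matrix.fromBlocks_multiply]
      rw [hβ 0, mR2 0, Matrix.conjTranspose_one, hα 1]
      have h11 : mPolyEval (PL1 1) 1 z
          = (1 + z⁻¹ • (PL1 1 0 * 1)) * (z ^ 1 • 1)
            + -(z⁻¹ • (PL1 1 0 * szHR N w PR1 0)) * 0 := by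
        rw [hP1, Matrix.mul_zero, add_zero, pow_one, key2, Matrix.mul_one, smul_add,
          smul_smul, hzz, one_smul, add_comm]
      have h12 : szQL1 N w PL1 1 z
          = (1 + z⁻¹ • (PL1 1 0 * 1)) * S + -(z⁻¹ • (PL1 1 0 * szHR N w PR1 0)) * 1 := by
        rw [hQL1, hTm1, hT0, Matrix.mul_one, Matrix.mul_one, Matrix.add_mul, Matrix.one_mul,
          smul_mul_assoc, Matrix.mul_sub, Matrix.mul_smul, Matrix.mul_smul]
        abel
      have h21 : -((szHR N w PR1 0)⁻¹ * mRecipEval (PR2 0) 0 z)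
          = -(z⁻¹ • ((szHR N w PR1 0)⁻¹ * 1)) * (z ^ 1 • 1) + z⁻¹ • 1 * 0 := by
        rw [hrec0, Matrix.mul_zero, add_zero, pow_one, Matrix.neg_mul, key2, Matrix.mul_one,
          smul_smul, hzz, one_smul]
      have h22 : -((szHR N w PR1 0)⁻¹ * szQR2 N w PR2 0 z)
          = -(z⁻¹ • ((szHR N w PR1 0)⁻¹ * 1)) * S + z⁻¹ • 1 * 1 := by
        rw [hQR0, hTm1, Matrix.mul_one, Matrix.mul_one, Matrix.neg_mul, smul_mul_assoc,
          Matrix.mul_sub, Matrix.mul_smul, Matrix.mul_smul, hHinv' 0]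
        abel
      rw [← h11, ← h12, ← h21, ← h22]
    | succ m hm ih =>
      obtain ⟨t, rfl⟩ : ∃ t, m = t + 1 := ⟨m - 1, by omega⟩
      simp only [Nat.add_sub_cancel] at ih ⊢
      rw [hprod (t+1)]
      have hinit : (Matrix.fromBlocks (z ^ (t+1+1) • 1) S 0 1 :
            Matrix (Fin N ⊕ Fin N) (Fin N ⊕ Fin N) ℂ)
          = Matrix.fromBlocks (z ^ (t+1) • 1) S 0 1 * Matrix.fromBlocks (z • 1) 0 0 1 := by
        rw [Matrix.fromBlocks_multiply]
        rw [key2, smul_smul, Matrix.mul_zero, add_zero, Matrix.mul_zero, Matrix.mul_one,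
          zero_add, Matrix.zero_mul, Matrix.mul_zero, add_zero, Matrix.zero_mul,
          Matrix.one_mul, zero_add, ← pow_succ']
      rw [hinit, Matrix.mul_assoc,
        ← Matrix.mul_assoc (((List.range (t+1)).reverse.map R).prod)
          (Matrix.fromBlocks (z ^ (t+1) • 1) S 0 1) (Matrix.fromBlocks (z • 1) 0 0 1),
        ← ih, hR]
      rw [Matrix.fromBlocks_multiply]
      simp only [Matrix.mul_zero, Matrix.mul_one, add_zero, zero_add, key2]
      rw [Matrix.fromBlocks_multiply]
      have h11 : mPolyEval (PL1 (t+1+1)) (t+1+1) z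
          = (1 + z⁻¹ • (szVer PL1 (t+1+1) * (szVer PR2 (t+1))ᴴ))
              * (z • mPolyEval (PL1 (t+1)) (t+1) z)
            + -(z⁻¹ • (szVer PL1 (t+1+1) * szHR N w PR1 (t+1)))
              * (z • -((szHR N w PR1 t)⁻¹ * mRecipEval (PR2 t) t z)) := by
        rw [hPrec (t+1) (Nat.le_add_left 1 t) z, hRrec t z]
        simp only [Matrix.add_mul, Matrix.one_mul, Matrix.neg_mul, Matrix.mul_neg, neg_neg,
          key1, Matrix.mul_add, Matrix.mul_assoc, smul_neg]
        abel
      have h12 : szQL1 N w PL1 (t+1+1) z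
          = (1 + z⁻¹ • (szVer PL1 (t+1+1) * (szVer PR2 (t+1))ᴴ)) * szQL1 N w PL1 (t+1) z
            + -(z⁻¹ • (szVer PL1 (t+1+1) * szHR N w PR1 (t+1)))
              * -((szHR N w PR1 t)⁻¹ * szQR2 N w PR2 t z) := by
        rw [hQLrec (t+1) (Nat.le_add_left 1 t), hQRrec t]
        simp only [Matrix.add_mul, Matrix.one_mul, Matrix.neg_mul, Matrix.mul_neg, neg_neg,
          smul_mul_assoc, Matrix.mul_smul, Matrix.mul_add, smul_add, Matrix.mul_assoc]
        abel
      have h21 : -((szHR N w PR1 (t+1))⁻¹ * mRecipEval (PR2 (t+1)) (t+1) z)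
          = -(z⁻¹ • ((szHR N w PR1 (t+1))⁻¹ * (szVer PR2 (t+1))ᴴ))
              * (z • mPolyEval (PL1 (t+1)) (t+1) z)
            + z⁻¹ • 1 * (z • -((szHR N w PR1 t)⁻¹ * mRecipEval (PR2 t) t z)) := by
        rw [hRrec t z, Matrix.mul_add]
        have e : (szHR N w PR1 (t+1))⁻¹ * (szHR N w PR1 (t+1) * (szHR N w PR1 t)⁻¹
              * mRecipEval (PR2 t) t z)
            = (szHR N w PR1 t)⁻¹ * mRecipEval (PR2 t) t z := by
          rw [Matrix.mul_assoc (szHR N w PR1 (t+1)) _ _,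
            ← Matrix.mul_assoc ((szHR N w PR1 (t+1))⁻¹) _ _, hHinv' (t+1), Matrix.one_mul]
        rw [e, neg_add]
        simp only [Matrix.neg_mul, Matrix.mul_neg, key1, Matrix.one_mul, Matrix.mul_assoc]
      have h22 : -((szHR N w PR1 (t+1))⁻¹ * szQR2 N w PR2 (t+1) z)
          = -(z⁻¹ • ((szHR N w PR1 (t+1))⁻¹ * (szVer PR2 (t+1))ᴴ)) * szQL1 N w PL1 (t+1) z
            + z⁻¹ • 1 * -((szHR N w PR1 t)⁻¹ * szQR2 N w PR2 t z) := by
        rw [hQRrec t, Matrix.mul_smul, Matrix.mul_add]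
        have e : (szHR N w PR1 (t+1))⁻¹ * (szHR N w PR1 (t+1) * (szHR N w PR1 t)⁻¹
              * szQR2 N w PR2 t z)
            = (szHR N w PR1 t)⁻¹ * szQR2 N w PR2 t z := by
          rw [Matrix.mul_assoc (szHR N w PR1 (t+1)) _ _,
            ← Matrix.mul_assoc ((szHR N w PR1 (t+1))⁻¹) _ _, hHinv' (t+1), Matrix.one_mul]
        rw [e]
        simp only [Matrix.neg_mul, Matrix.mul_neg, smul_mul_assoc, Matrix.one_mul,
          Matrix.mul_assoc, smul_add, smul_neg, neg_add]
      rw [← h11, ← h12, ← h21, ← h22]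
  exact main n hn
end
end

section
/- Let α, β, H, H', K, K', W ∈ ℂ^{N×N} with H, H', K, K' invertible, H'·H^{−1} = I − β·α, and K·(K')^{−1} = I − α·β. Suppose the N×N matrices A, B, C, D satisfy the linear system: A·α − B·H^{−1} = α·W, C·α − D·H^{−1} = −H^{−1}·W, A·K + B·H^{−1}·β·K' = 0, and C·K + D·H^{−1}·β·K' = 0. Then A = α·W·β, B = −α·W·H', C = −H^{−1}·W·β, and D = H^{−1}·W·H'; equivalently the 2N×2N block matrix [[A,B],[C,D]] equals the dyadic product of the column [α; −H^{−1}] with W and the row [β, −H']. -/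
open Complex Matrix

noncomputable section

lemma core10 {N : ℕ}
    (α β H H' K K' X Y R : Matrix (Fin N) (Fin N) ℂ)
    (hH : IsUnit H) (hH' : IsUnit H') (hK : IsUnit K) (hK' : IsUnit K')
    (hHH : H' * H⁻¹ = 1 - β * α) (hKK : K * K'⁻¹ = 1 - α * β)
    (e1 : X * α - Y * H⁻¹ = R)
    (e3 : X * K + Y * H⁻¹ * β * K' = 0) :
    X = R * β ∧ Y = -(R * H') := by
  have hHd : IsUnit H.det := (isUnit_iff_isUnit_det H).mp hH
  have hH'd : IsUnit H'.det := (isUnit_iff_isUnit_det H').mp hH'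
  have hKd : IsUnit K.det := (isUnit_iff_isUnit_det K).mp hK
  have hK'd : IsUnit K'.det := (isUnit_iff_isUnit_det K').mp hK'
  set u : Matrix (Fin N) (Fin N) ℂ := 1 - α * β with hu
  set v : Matrix (Fin N) (Fin N) ℂ := 1 - β * α with hv
  set q : Matrix (Fin N) (Fin N) ℂ := K' * K⁻¹ with hq
  have huinv : u * q = 1 := by
    rw [← hKK, hq]
    calc K * K'⁻¹ * (K' * K⁻¹) = K * (K'⁻¹ * K') * K⁻¹ := by noncomm_ring
    _ = 1 := by rw [nonsing_inv_mul K' hK'd, mul_one, mul_nonsing_inv K hKd]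
  have hvinv : (H * H'⁻¹) * v = 1 := by
    rw [← hHH]
    calc H * H'⁻¹ * (H' * H⁻¹) = H * (H'⁻¹ * H') * H⁻¹ := by noncomm_ring
    _ = 1 := by rw [nonsing_inv_mul H' hH'd, mul_one, mul_nonsing_inv H hHd]
  have hvb : v * β = β * u := by rw [hv, hu]; noncomm_ring
  have hX : X = -(Y * H⁻¹ * β * q) := by
    have h0 : X + Y * H⁻¹ * β * q = 0 := by
      calc X + Y * H⁻¹ * β * q
          = X * (K * K⁻¹) + Y * H⁻¹ * β * (K' * K⁻¹) := by
            rw [mul_nonsing_inv K hKd, mul_one, hq]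
      _ = (X * K + Y * H⁻¹ * β * K') * K⁻¹ := by noncomm_ring
      _ = 0 := by rw [e3, zero_mul]
    exact eq_neg_of_add_eq_zero_left h0
  have step : v * (1 + β * q * α) = 1 := by
    calc v * (1 + β * q * α) = v + (v * β) * (q * α) := by noncomm_ring
    _ = v + β * (u * q) * α := by rw [hvb]; noncomm_ring
    _ = 1 := by rw [huinv, hv]; noncomm_ring
  have hkey : 1 + β * q * α = H * H'⁻¹ := by
    calc 1 + β * q * α = (H * H'⁻¹ * v) * (1 + β * q * α) := by rw [hvinv, one_mul]
    _ = (H * H'⁻¹) * (v * (1 + β * q * α)) := by noncomm_ring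
    _ = H * H'⁻¹ := by rw [step, mul_one]
  have hR : R = -(Y * H'⁻¹) := by
    rw [← e1, hX]
    calc -(Y * H⁻¹ * β * q) * α - Y * H⁻¹
        = -(Y * (H⁻¹ * (1 + β * q * α))) := by noncomm_ring
    _ = -(Y * ((H⁻¹ * H) * H'⁻¹)) := by rw [hkey]; noncomm_ring
    _ = -(Y * H'⁻¹) := by rw [nonsing_inv_mul H hHd, one_mul]
  have hY : Y = -(R * H') := by
    rw [hR]
    calc Y = Y * (H'⁻¹ * H') := by rw [nonsing_inv_mul H' hH'd, mul_one]
    _ = -(-(Y * H'⁻¹) * H') := by noncomm_ring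
  refine ⟨?_, hY⟩
  rw [hX, hY]
  calc -(-(R * H') * H⁻¹ * β * q) = R * (H' * H⁻¹) * (β * q) := by noncomm_ring
  _ = R * ((v * β) * q) := by rw [hHH]; noncomm_ring
  _ = R * (β * (u * q)) := by rw [hvb]; noncomm_ring
  _ = R * β := by rw [huinv, mul_one]

/-- the linear-algebra core of the computation of the leading Laurent
coefficient `M^{[0]}_n`: the unique solution of the linear system is the dyadic product. -/
theorem statement10 {N : ℕ} (hN : 1 ≤ N)
    (α β H H' K K' W A B C D : Matrix (Fin N) (Fin N) ℂ)
    (hH : IsUnit H) (hH' : IsUnit H') (hK : IsUnit K) (hK' : IsUnit K')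
    (hHH : H' * H⁻¹ = 1 - β * α) (hKK : K * K'⁻¹ = 1 - α * β)
    (e1 : A * α - B * H⁻¹ = α * W)
    (e2 : C * α - D * H⁻¹ = -(H⁻¹ * W))
    (e3 : A * K + B * H⁻¹ * β * K' = 0)
    (e4 : C * K + D * H⁻¹ * β * K' = 0) :
    A = α * W * β ∧ B = -(α * W * H') ∧ C = -(H⁻¹ * W * β) ∧ D = H⁻¹ * W * H' := by
  obtain ⟨hA, hB⟩ := core10 α β H H' K K' A B (α * W) hH hH' hK hK' hHH hKK e1 e3
  obtain ⟨hC, hD⟩ := core10 α β H H' K K' C D (-(H⁻¹ * W)) hH hH' hK hK' hHH hKK e2 e4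
  exact ⟨hA, hB, by rw [hC]; noncomm_ring, by rw [hD]; noncomm_ring⟩
end
end

section
/- Let W_{−2}, W_{−1} ∈ ℂ^{N×N} with W_{−2} invertible and W_{−1} + nI invertible for every integer n ≥ 1, and let (α_n)_{n≥1}, (β_n)_{n≥1} be sequences of N×N complex matrices satisfying, for all n ≥ 1, (W_{−1} + (n+1)I)·α_{n+1} = α_n·W_{−2} and β_n·(W_{−1} + nI) = W_{−2}·β_{n+1}. Then: (i) α_n = (W_{−1} + nI)^{−1}···(W_{−1} + 2I)^{−1}·α_1·W_{−2}^{n−1} and β_n = W_{−2}^{−(n−1)}·β_1·(W_{−1} + I)·(W_{−1} + 2I)···(W_{−1} + (n−1)I) for all n ≥ 1; (ii) for all n ≥ 2 the remaining equations of the system hold identically: −α_n·β_{n−1} + [α_n·β_{n−1}, W_{−1}] = α_n·W_{−2}·β_n − α_{n−1}·W_{−2}·β_{n−1}, and β_{n−1}·α_n = −W_{−2}·β_n·α_n + β_{n−1}·α_{n−1}·W_{−2}; here [A,B] := AB − BA. -/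
open Complex Matrix

noncomputable section

lemma flatMap_singleton_map {α β : Type*} (f : α → β) (l : List α) :
    l.flatMap (fun a => [f a]) = l.map f := by
  induction l with
  | nil => rfl
  | cons a l ih => simp [List.flatMap_cons, ih]

lemma prod_range_shift {M : Type*} [Monoid M] (f : ℕ → M) (m : ℕ) :
    ((List.range (m+1)).map f).prod = f 0 * ((List.range m).map (fun k => f (k+1))).prod := by
  rw [List.range_succ_eq_map, List.map_cons, List.prod_cons, List.map_map]
  rfl

lemma prod_range_last {M : Type*} [Monoid M] (f : ℕ → M) (m : ℕ) :
    ((List.range (m+1)).map f).prod = ((List.range m).map f).prod * f m := by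
  rw [List.range_succ, List.map_append, List.prod_append]
  simp

/-- explicit solution of the linear reduction (`W₀ = 0`) of the
non-Fuchsian matrix discrete Painlevé II system, and verification that the remaining
equations of the system hold identically. -/
theorem statement16 {N : ℕ} (hN : 1 ≤ N)
    (Wm2 Wm1 : Matrix (Fin N) (Fin N) ℂ)
    (hWm2 : IsUnit Wm2)
    (hWm1 : ∀ n : ℕ, 1 ≤ n → IsUnit (Wm1 + (n : ℂ) • 1))
    (α β : ℕ → Matrix (Fin N) (Fin N) ℂ)
    (hα : ∀ n : ℕ, 1 ≤ n → (Wm1 + ((n : ℂ) + 1) • 1) * α (n+1) = α n * Wm2)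
    (hβ : ∀ n : ℕ, 1 ≤ n → β n * (Wm1 + (n : ℂ) • 1) = Wm2 * β (n+1)) :
    (∀ n : ℕ, 1 ≤ n →
      α n = ((List.range (n-1)).map fun k => (Wm1 + ((n : ℂ) - (k : ℂ)) • 1)⁻¹).prod *
          α 1 * Wm2 ^ (n-1) ∧
      β n = Wm2⁻¹ ^ (n-1) * β 1 *
          ((List.range (n-1)).map fun k => Wm1 + ((k : ℂ) + 1) • 1).prod) ∧
    (∀ n : ℕ, 2 ≤ n →
      -(α n * β (n-1)) + ((α n * β (n-1)) * Wm1 - Wm1 * (α n * β (n-1))) =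
        α n * Wm2 * β n - α (n-1) * Wm2 * β (n-1) ∧
      β (n-1) * α n = -(Wm2 * β n * α n) + β (n-1) * α (n-1) * Wm2) := by
  have hWm2d : IsUnit Wm2.det := (Matrix.isUnit_iff_isUnit_det _).mp hWm2
  constructor
  · intro n hn
    induction n, hn using Nat.le_induction with
    | base => simp
    | succ n hn ih =>
      obtain ⟨m, rfl⟩ : ∃ m, n = m + 1 := ⟨n - 1, by omega⟩
      simp only [List.pure_def, List.bind_eq_flatMap, flatMap_singleton_map, List.map_map,
        Nat.add_sub_cancel] at ih ⊢
      obtain ⟨ihα, ihβ⟩ := ih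
      have hu : IsUnit (Wm1 + (((m+2 : ℕ) : ℂ)) • 1) := hWm1 (m + 2) (by omega)
      have hud : IsUnit (Wm1 + (((m+2 : ℕ) : ℂ)) • 1).det :=
        (Matrix.isUnit_iff_isUnit_det _).mp hu
      constructor
      · have h1 : α (m + 2) = (Wm1 + (((m+2:ℕ) : ℂ)) • 1)⁻¹ * (α (m+1) * Wm2) := by
          rw [← hα (m+1) (by omega), ← mul_assoc]
          have : (Wm1 + (((m+1:ℕ) : ℂ) + 1) • 1) = (Wm1 + (((m+2:ℕ) : ℂ)) • 1) := by
            push_cast; ring_nf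
          rw [this, Matrix.nonsing_inv_mul _ hud, one_mul]
        rw [h1, ihα, prod_range_shift]
        have e0 : ((fun k => (Wm1 + ((((m+2):ℕ) : ℂ) - (k:ℂ)) • 1)⁻¹) ∘ Nat.cast) 0
            = (Wm1 + (((m+2:ℕ):ℂ)) • 1)⁻¹ := by
          simp
        have e1 : (fun k => ((fun k => (Wm1 + ((((m+2):ℕ) : ℂ) - (k:ℂ)) • 1)⁻¹) ∘ Nat.cast) (k+1))
            = ((fun k => (Wm1 + ((((m+1):ℕ) : ℂ) - (k:ℂ)) • 1)⁻¹) ∘ Nat.cast) := by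
          ext k
          simp only [Function.comp]
          push_cast
          ring_nf
        rw [e0, e1, pow_succ]
        simp only [mul_assoc]
      · have h2 : β (m + 2) = Wm2⁻¹ * (β (m+1) * (Wm1 + (((m+1:ℕ):ℂ)) • 1)) := by
          rw [hβ (m+1) (by omega), ← mul_assoc, Matrix.nonsing_inv_mul _ hWm2d, one_mul]
        rw [h2, ihβ, prod_range_last]
        have e0 : ((fun k => Wm1 + ((k:ℂ) + 1) • 1) ∘ Nat.cast) m
            = Wm1 + (((m+1:ℕ):ℂ)) • 1 := by
          simp only [Function.comp]
          push_cast
          ring_nf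
        rw [e0, pow_succ']
        simp only [mul_assoc]
  · intro n hn
    obtain ⟨m, rfl⟩ : ∃ m, n = m + 1 := ⟨n - 1, by omega⟩
    have hm : 1 ≤ m := by omega
    have h1 := hα m hm
    have h2 := hβ m hm
    simp only [Nat.add_sub_cancel]
    constructor
    · have e1 : α (m+1) * Wm2 * β (m+1) = α (m+1) * (β m * (Wm1 + (m:ℂ) • 1)) := by
        rw [mul_assoc, ← h2]
      have e2 : α m * Wm2 * β m = ((Wm1 + ((m:ℂ)+1) • 1) * α (m+1)) * β m := by
        rw [h1]
      rw [e1, e2]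
      simp only [mul_add, add_mul, mul_smul_comm, smul_mul_assoc, mul_one, one_mul,
        ← mul_assoc]
      module
    · have e1 : Wm2 * β (m+1) * α (m+1) = (β m * (Wm1 + (m:ℂ) • 1)) * α (m+1) := by
        rw [← h2]
      have e2 : β m * α m * Wm2 = β m * ((Wm1 + ((m:ℂ)+1) • 1) * α (m+1)) := by
        rw [h1, ← mul_assoc]
      rw [e1, e2]
      simp only [mul_add, add_mul, mul_smul_comm, smul_mul_assoc, mul_one, one_mul,
        ← mul_assoc]
      module
end
end

section
/- Let A, C ∈ ℂ^{N×N} and set B := A·C − C·A. Assume B commutes with A and with C (so A, C, B span a Heisenberg algebra). Then for every z ∈ ℂ with z ≠ 0, the matrix w(z) := exp(−A·z^{−1} + C·z) is invertible, the map z ↦ w(z) is differentiable, and its right logarithmic derivative is the Laurent polynomial w′(z)·w(z)^{−1} = A·z^{−2} − B·z^{−1} + C; that is, w′(z)·w(z)^{−1} = W_{−2}z^{−2} + W_{−1}z^{−1} + W_0 with W_{−2} = A, W_0 = C, and W_{−1} = [W_0, W_{−2}] = C·A − A·C. -/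
open Complex Matrix NormedSpace

noncomputable section

section AuxHeisenberg
variable {N : ℕ}

theorem conj_lemma' (X Y : Matrix (Fin N) (Fin N) ℂ)
    (hX : X * (X * Y - Y * X) = (X * Y - Y * X) * X) (t : ℂ) :
    NormedSpace.exp (t • X) * Y = (Y + t • (X * Y - Y * X)) * NormedSpace.exp (t • X) := by
  letI : SeminormedRing (Matrix (Fin N) (Fin N) ℂ) := Matrix.linftyOpSemiNormedRing
  letI : NormedRing (Matrix (Fin N) (Fin N) ℂ) := Matrix.linftyOpNormedRing
  letI : NormedAlgebra ℂ (Matrix (Fin N) (Fin N) ℂ) := Matrix.linftyOpNormedAlgebra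
  set B := X * Y - Y * X with hB
  have hF : ∀ u : ℂ, HasDerivAt
      (fun u : ℂ => NormedSpace.exp (u • (-X)) * ((Y + u • B) * NormedSpace.exp (u • X)))
      0 u := by
    intro u
    have h1 := hasDerivAt_exp_smul_const' (𝕂 := ℂ) (-X) u
    have h2 : HasDerivAt (fun u : ℂ => Y + u • B) B u := by
      exact ((hasDerivAt_id u).smul_const B).const_add Y |>.congr_deriv (one_smul _ _)
    have h3 := hasDerivAt_exp_smul_const' (𝕂 := ℂ) X u
    have h := h1.mul (h2.mul h3)
    refine h.congr_deriv (Eq.symm ?_)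
    have hc : X * NormedSpace.exp (u • (-X)) = NormedSpace.exp (u • (-X)) * X :=
      (((Commute.refl X).neg_right).smul_right u).exp_right
    set Em := NormedSpace.exp (u • (-X)) with hEm
    set Ep := NormedSpace.exp (u • X) with hEp
    set m := Y + u • B with hm
    have key : (-X) * m + (B + m * X) = 0 := by
      rw [hm]
      have hx' : X * B = B * X := hX
      calc (-X) * (Y + u • B) + (B + (Y + u • B) * X)
          = (B - (X * Y - Y * X)) + (u • (B * X) - u • (X * B)) := by
            simp only [mul_add, add_mul, neg_mul, mul_smul_comm, smul_mul_assoc]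
            module
        _ = 0 := by rw [hx', ← hB]; simp
    calc (0 : Matrix (Fin N) (Fin N) ℂ)
        = Em * (((-X) * m + (B + m * X)) * Ep) := by rw [key]; simp
      _ = -X * Em * (m * Ep) + Em * (B * Ep + m * (X * Ep)) := by
          rw [neg_mul, neg_mul, hc]
          noncomm_ring
  have const : ∀ u : ℂ,
      NormedSpace.exp (u • (-X)) * ((Y + u • B) * NormedSpace.exp (u • X)) = Y := by
    intro u
    have := is_const_of_deriv_eq_zero (𝕜 := ℂ)
      (f := fun u : ℂ => NormedSpace.exp (u • (-X)) * ((Y + u • B) * NormedSpace.exp (u • X)))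
      (fun v => (hF v).differentiableAt) (fun v => (hF v).deriv) u 0
    simpa [NormedSpace.exp_zero] using this
  have hcom : Commute (t • X) (t • (-X)) :=
    (((Commute.refl X).neg_right).smul_left t).smul_right t
  have hinv : NormedSpace.exp (t • X) * NormedSpace.exp (t • (-X)) = 1 := by
    rw [← Matrix.exp_add_of_commute _ _ hcom,
      show t • X + t • (-X) = 0 by simp, NormedSpace.exp_zero]
  calc NormedSpace.exp (t • X) * Y
      = NormedSpace.exp (t • X) * (NormedSpace.exp (t • (-X)) * ((Y + t • B) * NormedSpace.exp (t • X))) := by rw [const t]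
    _ = (NormedSpace.exp (t • X) * NormedSpace.exp (t • (-X))) * ((Y + t • B) * NormedSpace.exp (t • X)) := by rw [mul_assoc]
    _ = (Y + t • B) * NormedSpace.exp (t • X) := by rw [hinv, one_mul]


theorem bch_lemma' (X Y : Matrix (Fin N) (Fin N) ℂ)
    (hX : X * (X * Y - Y * X) = (X * Y - Y * X) * X)
    (hY : Y * (X * Y - Y * X) = (X * Y - Y * X) * Y) :
    NormedSpace.exp (X + Y) = NormedSpace.exp X * (NormedSpace.exp Y * NormedSpace.exp ((-(2⁻¹ : ℂ)) • (X * Y - Y * X))) := by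
  letI : SeminormedRing (Matrix (Fin N) (Fin N) ℂ) := Matrix.linftyOpSemiNormedRing
  letI : NormedRing (Matrix (Fin N) (Fin N) ℂ) := Matrix.linftyOpNormedRing
  letI : NormedAlgebra ℂ (Matrix (Fin N) (Fin N) ℂ) := Matrix.linftyOpNormedAlgebra
  set B := X * Y - Y * X with hB
  have hRt : ∀ t : ℂ, HasDerivAt
      (fun t : ℂ => NormedSpace.exp (t • X) * (NormedSpace.exp (t • Y) * NormedSpace.exp ((-(t ^ 2 / 2)) • B)))
      ((X + Y) * (NormedSpace.exp (t • X) * (NormedSpace.exp (t • Y) * NormedSpace.exp ((-(t ^ 2 / 2)) • B)))) t := by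
    intro t
    have hφ : HasDerivAt (fun t : ℂ => -(t ^ 2 / 2)) (-t) t := by
      have h := ((hasDerivAt_pow 2 t).div_const 2).neg
      refine h.congr_deriv (Eq.symm ?_)
      push_cast; ring
    have h3 : HasDerivAt (fun t : ℂ => NormedSpace.exp ((-(t ^ 2 / 2)) • B))
        ((-t) • (B * NormedSpace.exp ((-(t ^ 2 / 2)) • B))) t := by
      have := (hasDerivAt_exp_smul_const' (𝕂 := ℂ) B (-(t ^ 2 / 2))).scomp t hφ
      simp only [Function.comp_def, neg_smul] at this ⊢
      exact this
    have h1 := hasDerivAt_exp_smul_const' (𝕂 := ℂ) X t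
    have h2 := hasDerivAt_exp_smul_const' (𝕂 := ℂ) Y t
    have h := h1.mul (h2.mul h3)
    refine h.congr_deriv (Eq.symm ?_)
    set E1 := NormedSpace.exp (t • X) with hE1
    set E2 := NormedSpace.exp (t • Y) with hE2
    set E3 := NormedSpace.exp ((-(t ^ 2 / 2)) • B) with hE3
    have cXB : Commute X B := hX
    have cYB : Commute Y B := hY
    have hb1 : B * E1 = E1 * B := ((cXB.symm.smul_right t).exp_right).eq
    have hb2 : B * E2 = E2 * B := ((cYB.symm.smul_right t).exp_right).eq
    have hc1 : E1 * Y = Y * E1 + t • (B * E1) := by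
      rw [hE1, conj_lemma' X Y hX t, ← hB, add_mul, smul_mul_assoc]
    have h12 : E1 * E2 * B = B * E1 * E2 := by
      rw [mul_assoc, ← hb2, ← mul_assoc, ← hb1]
    have key1 : E1 * Y * E2 * E3 = Y * E1 * E2 * E3 + t • (B * E1 * E2 * E3) := by
      rw [hc1]; simp only [add_mul, smul_mul_assoc]
    calc (X + Y) * (E1 * (E2 * E3))
        = X * E1 * E2 * E3 + ((Y * E1 * E2 * E3 + t • (B * E1 * E2 * E3))
            + (-t) • (B * E1 * E2 * E3)) := by
          simp only [add_mul, ← mul_assoc]; module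
      _ = X * E1 * E2 * E3 + (E1 * Y * E2 * E3 + (-t) • (E1 * E2 * B * E3)) := by
          rw [key1, h12]
      _ = X * E1 * (E2 * E3) + E1 * (Y * E2 * E3 + E2 * ((-t) • (B * E3))) := by
          simp only [mul_add, mul_smul_comm, ← mul_assoc]
  -- now the uniqueness argument
  have hG : ∀ t : ℂ, HasDerivAt
      (fun t : ℂ => NormedSpace.exp (t • (-(X + Y))) *
        (NormedSpace.exp (t • X) * (NormedSpace.exp (t • Y) * NormedSpace.exp ((-(t ^ 2 / 2)) • B)))) 0 t := by
    intro t
    have h0 := hasDerivAt_exp_smul_const' (𝕂 := ℂ) (-(X + Y)) t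
    have h := h0.mul (hRt t)
    refine h.congr_deriv (Eq.symm ?_)
    have hc : (X + Y) * NormedSpace.exp (t • (-(X + Y))) = NormedSpace.exp (t • (-(X + Y))) * (X + Y) :=
      (((Commute.refl (X + Y)).neg_right).smul_right t).exp_right |>.eq
    set E0 := NormedSpace.exp (t • (-(X + Y))) with hE0
    set R := NormedSpace.exp (t • X) * (NormedSpace.exp (t • Y) * NormedSpace.exp ((-(t ^ 2 / 2)) • B)) with hR
    show (0 : Matrix (Fin N) (Fin N) ℂ) = -(X + Y) * E0 * R + E0 * ((X + Y) * R)
    rw [neg_mul, neg_mul, hc, mul_assoc]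
    simp
  have const := is_const_of_deriv_eq_zero (𝕜 := ℂ)
    (f := fun t : ℂ => NormedSpace.exp (t • (-(X + Y))) *
      (NormedSpace.exp (t • X) * (NormedSpace.exp (t • Y) * NormedSpace.exp ((-(t ^ 2 / 2)) • B))))
    (fun v => (hG v).differentiableAt) (fun v => (hG v).deriv) 1 0
  have h10 : NormedSpace.exp (-(X + Y)) *
      (NormedSpace.exp X * (NormedSpace.exp Y * NormedSpace.exp ((-(2⁻¹ : ℂ)) • B))) = 1 := by
    have e1 : ((1 : ℂ) • (-(X + Y))) = -(X + Y) := one_smul _ _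
    have e2 : ((1 : ℂ) • X) = X := one_smul _ _
    have e3 : ((1 : ℂ) • Y) = Y := one_smul _ _
    have e4 : (-(((1 : ℂ)) ^ 2 / 2)) = -(2⁻¹ : ℂ) := by norm_num
    have := const
    simp only [e1, e2, e3, e4] at this
    simpa [NormedSpace.exp_zero] using this
  have hinv : NormedSpace.exp (X + Y) * NormedSpace.exp (-(X + Y)) = 1 := by
    rw [← Matrix.exp_add_of_commute _ _ ((Commute.refl (X + Y)).neg_right),
      add_neg_cancel, NormedSpace.exp_zero]
  calc NormedSpace.exp (X + Y)
      = NormedSpace.exp (X + Y) * (NormedSpace.exp (-(X + Y)) *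
          (NormedSpace.exp X * (NormedSpace.exp Y * NormedSpace.exp ((-(2⁻¹ : ℂ)) • B)))) := by rw [h10, mul_one]
    _ = (NormedSpace.exp (X + Y) * NormedSpace.exp (-(X + Y))) *
          (NormedSpace.exp X * (NormedSpace.exp Y * NormedSpace.exp ((-(2⁻¹ : ℂ)) • B))) := by rw [mul_assoc]
    _ = NormedSpace.exp X * (NormedSpace.exp Y * NormedSpace.exp ((-(2⁻¹ : ℂ)) • B)) := by rw [hinv, one_mul]


end AuxHeisenberg

open Complex Matrix

/-- the Freud-type matrix of weights `w(z) = exp(-A z⁻¹ + C z)` built from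
a Heisenberg triple has right logarithmic derivative `A z⁻² - B z⁻¹ + C`. -/
theorem statement17 {N : ℕ} (hN : 1 ≤ N) (A C : Matrix (Fin N) (Fin N) ℂ)
    (hAB : A * (A * C - C * A) = (A * C - C * A) * A)
    (hCB : C * (A * C - C * A) = (A * C - C * A) * C) :
    ∀ z : ℂ, z ≠ 0 →
      IsUnit (NormedSpace.exp (-(z⁻¹ • A) + z • C)) ∧
      ∀ i j, HasDerivAt
        (fun s : ℂ => NormedSpace.exp (-(s⁻¹ • A) + s • C) i j)
        (((z⁻¹ ^ 2 • A - z⁻¹ • (A * C - C * A) + C) *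
            NormedSpace.exp (-(z⁻¹ • A) + z • C)) i j) z := by
  letI : SeminormedRing (Matrix (Fin N) (Fin N) ℂ) := Matrix.linftyOpSemiNormedRing
  letI : NormedRing (Matrix (Fin N) (Fin N) ℂ) := Matrix.linftyOpNormedRing
  letI : NormedAlgebra ℂ (Matrix (Fin N) (Fin N) ℂ) := Matrix.linftyOpNormedAlgebra
  intro z hz
  set B := A * C - C * A with hB
  -- decomposition lemma
  have hdec : ∀ s : ℂ, s ≠ 0 → NormedSpace.exp (-(s⁻¹ • A) + s • C)
      = NormedSpace.exp ((-s⁻¹) • A) * (NormedSpace.exp (s • C) * NormedSpace.exp ((2⁻¹ : ℂ) • B)) := by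
    intro s hs
    have e1 : (-s⁻¹) * s = -1 := by field_simp
    have e2 : s * (-s⁻¹) = -1 := by field_simp
    have hXY : ((-s⁻¹) • A) * (s • C) - (s • C) * ((-s⁻¹) • A) = (-1 : ℂ) • B := by
      rw [smul_mul_smul_comm, smul_mul_smul_comm, e1, e2, ← smul_sub, hB]
    have hx : ((-s⁻¹) • A) * (((-s⁻¹) • A) * (s • C) - (s • C) * ((-s⁻¹) • A))
        = (((-s⁻¹) • A) * (s • C) - (s • C) * ((-s⁻¹) • A)) * ((-s⁻¹) • A) := by
      rw [hXY, smul_mul_smul_comm, smul_mul_smul_comm, hAB]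
      congr 1
      ring
    have hy : (s • C) * (((-s⁻¹) • A) * (s • C) - (s • C) * ((-s⁻¹) • A))
        = (((-s⁻¹) • A) * (s • C) - (s • C) * ((-s⁻¹) • A)) * (s • C) := by
      rw [hXY, smul_mul_smul_comm, smul_mul_smul_comm, hCB]
      congr 1
      ring
    have h := bch_lemma' ((-s⁻¹) • A) (s • C) hx hy
    rw [hXY] at h
    have e3 : (-(2⁻¹ : ℂ)) • ((-1 : ℂ) • B) = (2⁻¹ : ℂ) • B := by
      rw [smul_smul]; norm_num
    rw [e3] at h
    rw [← h, neg_smul]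
  set E1 := NormedSpace.exp ((-z⁻¹) • A) with hE1
  set E2 := NormedSpace.exp (z • C) with hE2
  set E3 := NormedSpace.exp ((2⁻¹ : ℂ) • B) with hE3
  constructor
  · exact Matrix.isUnit_exp _
  · -- derivative of the decomposed product
    have hu : HasDerivAt (fun s : ℂ => -s⁻¹) ((z ^ 2)⁻¹) z := by
      simpa using (hasDerivAt_inv hz).fun_neg
    have h1 : HasDerivAt (fun s : ℂ => NormedSpace.exp ((-s⁻¹) • A)) ((z ^ 2)⁻¹ • (A * E1)) z := by
      have := (hasDerivAt_exp_smul_const' (𝕂 := ℂ) A (-z⁻¹)).scomp z hu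
      simp only [Function.comp_def] at this
      exact this
    have h2 := hasDerivAt_exp_smul_const' (𝕂 := ℂ) C z
    have h23 : HasDerivAt (fun s : ℂ => NormedSpace.exp (s • C) * E3) ((C * E2) * E3) z :=
      h2.mul_const E3
    have hg := h1.mul h23
    have hev : (fun s : ℂ => NormedSpace.exp (-(s⁻¹ • A) + s • C))
        =ᶠ[nhds z] (fun s : ℂ => NormedSpace.exp ((-s⁻¹) • A) * (NormedSpace.exp (s • C) * E3)) := by
      filter_upwards [eventually_ne_nhds hz] with s hs
      rw [hdec s hs]
    have hW : HasDerivAt (fun s : ℂ => NormedSpace.exp (-(s⁻¹ • A) + s • C))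
        ((z ^ 2)⁻¹ • (A * E1) * (E2 * E3) + E1 * ((C * E2) * E3)) z :=
      hg.congr_of_eventuallyEq hev
    have hc : E1 * C = (C + (-z⁻¹) • B) * E1 := by
      rw [hE1, conj_lemma' A C hAB (-z⁻¹), ← hB]
    have hDeq : (z ^ 2)⁻¹ • (A * E1) * (E2 * E3) + E1 * ((C * E2) * E3)
        = (z⁻¹ ^ 2 • A - z⁻¹ • B + C) * NormedSpace.exp (-(z⁻¹ • A) + z • C) := by
      rw [hdec z hz]
      calc (z ^ 2)⁻¹ • (A * E1) * (E2 * E3) + E1 * ((C * E2) * E3)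
          = (z ^ 2)⁻¹ • (A * E1 * E2 * E3) + (E1 * C) * E2 * E3 := by
            simp only [smul_mul_assoc, ← mul_assoc]
        _ = (z ^ 2)⁻¹ • (A * E1 * E2 * E3) +
              (C * E1 * E2 * E3 + (-z⁻¹) • (B * E1 * E2 * E3)) := by
            rw [hc]; simp only [add_mul, smul_mul_assoc]
        _ = (z⁻¹ ^ 2 • A - z⁻¹ • B + C) * (E1 * (E2 * E3)) := by
            simp only [add_mul, sub_mul, smul_mul_assoc, ← mul_assoc, inv_pow]
            module
    rw [hDeq] at hW
    intro i j
    let L : Matrix (Fin N) (Fin N) ℂ →ₗ[ℂ] ℂ :=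
      { toFun := fun M => M i j,
        map_add' := fun _ _ => rfl,
        map_smul' := fun _ _ => rfl }
    have := (LinearMap.toContinuousLinearMap L).hasFDerivAt.comp_hasDerivAt z hW
    exact this
end
end

section
/- Let U ⊆ ℂ be a nonempty open connected set, let W : U → ℂ^{N×N} be analytic, and let w : U → ℂ^{N×N} be (complex) differentiable with w′(z) = W(z)·w(z) for all z ∈ U. If M ∈ ℂ^{N×N} satisfies M·W(z) = W(z)·M for all z ∈ U and M·w(z₀) = w(z₀)·M for some z₀ ∈ U, then M·w(z) = w(z)·M for all z ∈ U. -/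
open Complex Matrix Set Metric

noncomputable section



attribute [local instance] Matrix.linftyOpNormedAddCommGroup Matrix.linftyOpNormedSpace
  Matrix.linftyOpNormedRing Matrix.linftyOpNormedAlgebra

private def matEquivAux (N : ℕ) : Matrix (Fin N) (Fin N) ℂ ≃ₗ[ℂ] (Fin N → Fin N → ℂ) where
  toFun A := fun i j => A i j
  map_add' _ _ := rfl
  map_smul' _ _ := rfl
  invFun f := Matrix.of f
  left_inv _ := rfl
  right_inv _ := rfl

private lemma hasDerivAt_of_entriesAux {N : ℕ} {f : ℂ → Matrix (Fin N) (Fin N) ℂ}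
    {a : Matrix (Fin N) (Fin N) ℂ} {z : ℂ}
    (h : ∀ i j, HasDerivAt (fun s => f s i j) (a i j) z) : HasDerivAt f a z := by
  set ec := (matEquivAux N).toContinuousLinearEquiv with hec
  have h1 : HasDerivAt (fun s => ec (f s)) (ec a) z := by
    rw [hasDerivAt_pi]
    intro i
    rw [hasDerivAt_pi]
    intro j
    exact h i j
  have h2 := ((ec.symm : (Fin N → Fin N → ℂ) →L[ℂ] Matrix (Fin N) (Fin N) ℂ).hasFDerivAt
      (x := ec (f z))).comp_hasDerivAt z h1
  simp [Function.comp_def] at h2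
  exact h2

/-- Local vanishing: if `g` solves `g' = W g` on `U` and `g z₀ = 0`, then `g` vanishes
on a neighborhood of `z₀`. -/
private lemma local_vanish {N : ℕ} {U : Set ℂ} (hUopen : IsOpen U)
    {W g : ℂ → Matrix (Fin N) (Fin N) ℂ}
    (hWc : ContinuousOn W U)
    (hg' : ∀ z ∈ U, HasDerivAt g (W z * g z) z)
    {z₀ : ℂ} (hz₀ : z₀ ∈ U) (h0 : g z₀ = 0) :
    ∀ᶠ z in nhds z₀, g z = 0 := by
  obtain ⟨r, hr, hball⟩ := Metric.isOpen_iff.mp hUopen z₀ hz₀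
  have hcbU : closedBall z₀ (r / 2) ⊆ U := fun y hy =>
    hball (lt_of_le_of_lt (mem_closedBall.mp hy) (by linarith))
  -- bound on W on the closed ball
  obtain ⟨C₀, hC₀⟩ := (isCompact_closedBall z₀ (r / 2)).exists_bound_of_continuousOn
    (hWc.mono hcbU)
  set C : ℝ := max C₀ 0 with hC
  have hCnn : 0 ≤ C := le_max_right _ _
  have hCb : ∀ y ∈ closedBall z₀ (r / 2), ‖W y‖ ≤ C := fun y hy =>
    (hC₀ y hy).trans (le_max_left _ _)
  have : ∀ z ∈ ball z₀ (r / 2), g z = 0 := by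
    intro z hz
    have hzr : ‖z - z₀‖ ≤ r / 2 := le_of_lt (by simpa [dist_eq_norm] using hz)
    set γ : ℝ → ℂ := fun t => z₀ + t • (z - z₀) with hγ
    have hγmem : ∀ t ∈ Icc (0 : ℝ) 1, γ t ∈ closedBall z₀ (r / 2) := by
      intro t ht
      simp only [hγ, mem_closedBall, dist_eq_norm, add_sub_cancel_left]
      rw [norm_smul, Real.norm_eq_abs, _root_.abs_of_nonneg ht.1]
      calc t * ‖z - z₀‖ ≤ 1 * ‖z - z₀‖ := by
            apply mul_le_mul_of_nonneg_right ht.2 (norm_nonneg _)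
        _ ≤ r / 2 := by simpa using hzr
    set c : ℝ → ℝ := fun t => max 0 (min 1 t) with hc
    have hcmem : ∀ t, c t ∈ Icc (0 : ℝ) 1 :=
      fun t => ⟨le_max_left _ _, max_le zero_le_one (min_le_left _ _)⟩
    have hceq : ∀ t ∈ Icc (0 : ℝ) 1, c t = t := by
      intro t ht
      simp [hc, min_eq_right ht.2, max_eq_right ht.1]
    set v : ℝ → Matrix (Fin N) (Fin N) ℂ → Matrix (Fin N) (Fin N) ℂ :=
      fun t x => (z - z₀) • (W (γ (c t)) * x) with hv
    set K : NNReal := (r / 2 * C).toNNReal with hK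
    have hlip : ∀ t, LipschitzWith K (v t) := by
      intro t
      apply LipschitzWith.of_dist_le_mul
      intro x y
      have hWt : ‖W (γ (c t))‖ ≤ C := hCb _ (hγmem _ (hcmem t))
      simp only [hv, dist_eq_norm, ← smul_sub, ← mul_sub]
      rw [norm_smul]
      calc ‖z - z₀‖ * ‖W (γ (c t)) * (x - y)‖
          ≤ ‖z - z₀‖ * (‖W (γ (c t))‖ * ‖x - y‖) :=
            mul_le_mul_of_nonneg_left (norm_mul_le _ _) (norm_nonneg _)
        _ ≤ (r / 2) * (C * ‖x - y‖) := by
            apply mul_le_mul hzr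
            · exact mul_le_mul_of_nonneg_right hWt (norm_nonneg _)
            · positivity
            · linarith
        _ = (K : ℝ) * ‖x - y‖ := by
            rw [hK, Real.coe_toNNReal _ (by positivity)]
            ring
    have hγd : ∀ t : ℝ, HasDerivAt γ (z - z₀) t := by
      intro t
      have := ((hasDerivAt_id t).smul_const (z - z₀)).const_add z₀
      simpa [hγ] using this
    have hf' : ∀ t ∈ Icc (0 : ℝ) 1, HasDerivAt (g ∘ γ) (v t ((g ∘ γ) t)) t := by
      intro t ht
      have hmem : γ t ∈ U := hcbU (hγmem t ht)
      have := (hg' _ hmem).scomp t (hγd t)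
      have e : v t ((g ∘ γ) t) = (z - z₀) • (W (γ t) * g (γ t)) := by simp [hv, hceq t ht]
      rw [e]
      exact this
    have hzero : EqOn (g ∘ γ) (fun _ => (0 : Matrix (Fin N) (Fin N) ℂ)) (Icc 0 1) := by
      apply ODE_solution_unique hlip
      · intro t ht
        exact ((hf' t ht).continuousAt).continuousWithinAt
      · intro t ht
        exact (hf' t (Ico_subset_Icc_self ht)).hasDerivWithinAt
      · exact continuousOn_const
      · intro t ht
        have : v t 0 = 0 := by simp [hv]
        rw [this]
        exact (hasDerivAt_const t _).hasDerivWithinAt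
      · simpa [hγ] using h0
    have := hzero (right_mem_Icc.mpr zero_le_one)
    simpa [hγ] using this
  exact Filter.eventually_of_mem (Metric.ball_mem_nhds z₀ (by linarith)) this



/-- a constant matrix commuting with the coefficient of a matrix Pearson
equation on a connected open set, and with the solution at one point, commutes with the
solution everywhere. -/
theorem statement18 {N : ℕ} (hN : 1 ≤ N) (U : Set ℂ)
    (hUopen : IsOpen U) (hUconn : IsConnected U)
    (W w : ℂ → Matrix (Fin N) (Fin N) ℂ)
    (hW : ∀ i j, AnalyticOn ℂ (fun z => W z i j) U)
    (hw : ∀ z ∈ U, ∀ i j, HasDerivAt (fun s => w s i j) ((W z * w z) i j) z)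
    (M : Matrix (Fin N) (Fin N) ℂ)
    (hMW : ∀ z ∈ U, M * W z = W z * M)
    (z₀ : ℂ) (hz₀ : z₀ ∈ U) (hM0 : M * w z₀ = w z₀ * M) :
    ∀ z ∈ U, M * w z = w z * M := by
  classical
  set g : ℂ → Matrix (Fin N) (Fin N) ℂ := fun z => M * w z - w z * M with hgdef
  -- matrix-level derivative of w
  have hw' : ∀ z ∈ U, HasDerivAt w (W z * w z) z := fun z hz =>
    hasDerivAt_of_entriesAux (fun i j => hw z hz i j)
  -- derivative of g
  have hg' : ∀ z ∈ U, HasDerivAt g (W z * g z) z := by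
    intro z hz
    have h1 : HasDerivAt (fun s => M * w s) (M * (W z * w z)) z := (hw' z hz).const_mul M
    have h2 : HasDerivAt (fun s => w s * M) ((W z * w z) * M) z := (hw' z hz).mul_const M
    have h3 := h1.sub h2
    have heq : M * (W z * w z) - (W z * w z) * M = W z * g z := by
      rw [hgdef]
      simp only [mul_sub]
      rw [← mul_assoc, ← mul_assoc, ← hMW z hz, mul_assoc (W z) (w z) M]
    rw [heq] at h3
    exact h3
  -- continuity of W
  have hWcEntry : ∀ i j, ContinuousOn (fun z => W z i j) U := fun i j =>
    (hW i j).continuousOn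
  have hWc : ContinuousOn W U := by
    intro z hz
    apply continuousWithinAt_pi.mpr
    intro i
    apply continuousWithinAt_pi.mpr
    intro j
    exact hWcEntry i j z hz
  -- g vanishes near z₀
  have h0 : g z₀ = 0 := by rw [hgdef]; simp [hM0]
  have hev : ∀ᶠ z in nhds z₀, g z = 0 := local_vanish hUopen hWc hg' hz₀ h0
  -- entries of g are analytic on U
  have hwAna : ∀ i j, AnalyticOnNhd ℂ (fun z => w z i j) U := by
    intro i j
    apply DifferentiableOn.analyticOnNhd _ hUopen
    intro z hz
    exact ((hw z hz i j).differentiableAt).differentiableWithinAt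
  have hgAna : ∀ i j, AnalyticOnNhd ℂ (fun z => g z i j) U := by
    intro i j
    rw [hgdef]
    simp only [Matrix.sub_apply, Matrix.mul_apply]
    apply AnalyticOnNhd.sub
    · exact Finset.analyticOnNhd_fun_sum _ fun k _ =>
        ((analyticOnNhd_const).mul (hwAna k j))
    · exact Finset.analyticOnNhd_fun_sum _ fun k _ =>
        ((hwAna i k).mul (analyticOnNhd_const))
  -- identity theorem
  have hzero : ∀ z ∈ U, g z = 0 := by
    intro z hz
    ext i j
    have hevij : (fun z => g z i j) =ᶠ[nhds z₀] 0 := by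
      filter_upwards [hev] with s hs
      simp [hs]
    have := (hgAna i j).eqOn_zero_of_preconnected_of_eventuallyEq_zero
      hUconn.isPreconnected hz₀ hevij hz
    simpa using this
  intro z hz
  have := hzero z hz
  rw [hgdef] at this
  simpa [sub_eq_zero] using this
end
end
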